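/- arXiv:0904.4202 — 3 statements merged into one kernel-verified Lean document; each statement's English description precedes it below -/
import Mathlib

section
/- (Proposition: distribution of the decoding delay.) Let k ≥ 1 be an integer and p ∈ (0,1). Let (B_{i,j})_{i≥1, 0≤j≤k} be an i.i.d. array of Bernoulli(p) random variables, X_i = (∑_{j=0}^{k} B_{i,j}) − 1, and Y_0 = 0, Y_n = max(Y_{n−1} + X_n, 0). For y ≥ 0 let H_y = inf{ h ≥ 0 : Y^{(y)}_h = 0 } be the hitting time of 0 of an independent copy of the reflected walk started at y. Fix i ≥ 1 and j ∈ {0, …, k−1}, and define the decoding delay D_j = (k − j) + (k+1) · inf{ m ≥ 0 : Y_{i+m} = 0 }. Then for every h ≥ 0: P(D_j = (k−j) + h(k+1) | B_{i,j} = 1) = ∑_{y≥0} ∑_{u=0}^{k} C(k, u) p^u (1−p)^{k−u} · P(H_{y+u} = h) · P(Y_{i−1} = y). -/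
open MeasureTheory ProbabilityTheory
open scoped ENNReal

namespace Stmt9Aux

/-- deterministic reflected walk -/
def walk (y : ℤ) (v : ℕ → ℤ) : ℕ → ℤ
  | 0 => y
  | n+1 => max (walk y v n + v n) 0

lemma walk_congr {y : ℤ} {v w : ℕ → ℤ} : ∀ {n : ℕ}, (∀ t, t < n → v t = w t) →
    walk y v n = walk y w n
  | 0, _ => rfl
  | n+1, h => by
      rw [walk, walk, walk_congr (fun t ht => h t (ht.trans (Nat.lt_succ_self n))),
        h n (Nat.lt_succ_self n)]

/-- first-hit predicate -/
def Hits (y : ℤ) (v : ℕ → ℤ) (h : ℕ) : Prop :=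
  walk y v h = 0 ∧ ∀ m, m < h → walk y v m ≠ 0

lemma Hits_congr {y : ℤ} {v w : ℕ → ℤ} {h : ℕ} (hvw : ∀ t, t < h → v t = w t) :
    Hits y v h ↔ Hits y w h := by
  unfold Hits
  constructor <;> rintro ⟨h1, h2⟩
  · refine ⟨by rw [← walk_congr hvw]; exact h1, fun m hm => ?_⟩
    rw [← walk_congr (fun t ht => hvw t (ht.trans hm))]; exact h2 m hm
  · refine ⟨by rw [walk_congr hvw]; exact h1, fun m hm => ?_⟩
    rw [walk_congr (fun t ht => hvw t (ht.trans hm))]; exact h2 m hm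

lemma sInf_char {P : ℕ → Prop} {h : ℕ} :
    sInf {n : ℕ∞ | ∃ m : ℕ, n = (m : ℕ∞) ∧ P m} = (h : ℕ∞) ↔ (P h ∧ ∀ m, m < h → ¬ P m) := by
  constructor
  · intro hs
    by_cases hne : {m : ℕ | P m}.Nonempty
    · have hmem := Nat.sInf_mem hne
      have h1 : sInf {n : ℕ∞ | ∃ m : ℕ, n = (m : ℕ∞) ∧ P m}
          = ((sInf {m | P m} : ℕ) : ℕ∞) := by
        apply le_antisymm
        · exact sInf_le ⟨_, rfl, hmem⟩
        · refine le_sInf ?_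
          rintro n ⟨m, rfl, hm⟩
          exact_mod_cast Nat.sInf_le hm
      rw [h1] at hs
      have h2 : sInf {m | P m} = h := by exact_mod_cast hs
      rw [h2] at hmem
      refine ⟨hmem, fun m hm => ?_⟩
      rw [← h2] at hm
      exact Nat.notMem_of_lt_sInf hm
    · exfalso
      have : {n : ℕ∞ | ∃ m : ℕ, n = (m : ℕ∞) ∧ P m} = ∅ := by
        ext n; simp only [Set.mem_setOf_eq, Set.mem_empty_iff_false, iff_false]
        rintro ⟨m, rfl, hm⟩
        exact hne ⟨m, hm⟩
      rw [this, sInf_empty] at hs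
      exact (ENat.top_ne_coe h) hs
  · rintro ⟨hP, hmin⟩
    apply le_antisymm
    · exact sInf_le ⟨h, rfl, hP⟩
    · refine le_sInf ?_
      rintro n ⟨m, rfl, hm⟩
      have : h ≤ m := not_lt.1 fun hlt => hmin m hlt hm
      exact_mod_cast this

/-- atom decomposition of a cylinder event -/
lemma meas_cyl {Ω α ι : Type*} [MeasurableSpace Ω] (μ : Measure Ω) [Fintype ι]
    [MeasurableSpace α] [MeasurableSingletonClass α] [Countable α]
    (f : ι → Ω → α) (hf : ∀ c, Measurable (f c)) (P : (ι → α) → Prop) [DecidablePred P] :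
    μ {ω | P (fun c => f c ω)} = ∑' v : ι → α, if P v then μ (⋂ c, f c ⁻¹' {v c}) else 0 := by
  have hmeas : ∀ v : ι → α, MeasurableSet (⋂ c, f c ⁻¹' {v c}) :=
    fun v => MeasurableSet.iInter (fun c => hf c (measurableSet_singleton _))
  have hset : {ω | P (fun c => f c ω)}
      = ⋃ v : ι → α, if P v then (⋂ c, f c ⁻¹' {v c}) else ∅ := by
    ext ω
    simp only [Set.mem_setOf_eq, Set.mem_iUnion]
    constructor
    · intro hP
      refine ⟨fun c => f c ω, ?_⟩
      rw [if_pos hP]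
      simp [Set.mem_iInter]
    · rintro ⟨v, hv⟩
      by_cases hPv : P v
      · rw [if_pos hPv] at hv
        simp only [Set.mem_iInter, Set.mem_preimage, Set.mem_singleton_iff] at hv
        have : (fun c => f c ω) = v := funext fun c => hv c
        rwa [this]
      · rw [if_neg hPv] at hv
        exact absurd hv (Set.notMem_empty ω)
  rw [hset, measure_iUnion]
  · congr 1
    ext v
    split_ifs with hPv <;> simp
  · intro v w hvw
    simp only [Function.onFun]
    split_ifs with h1 h2
    · obtain ⟨c, hc⟩ := Function.ne_iff.1 hvw
      refine Set.disjoint_left.2 fun ω hω hω' => hc ?_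
      simp only [Set.mem_iInter, Set.mem_preimage, Set.mem_singleton_iff] at hω hω'
      rw [← hω c, hω' c]
    all_goals simp
  · intro v
    split_ifs
    · exact hmeas v
    · exact MeasurableSet.empty

section Split

variable {Ω ι' : Type*} [MeasurableSpace Ω] {μ : Measure Ω}
  {B : ι' → Ω → ℕ}

open scoped Classical in
noncomputable def extend (S : Finset ι') (g : ↥S → ℕ) : ι' → ℕ :=
  fun c => if hc : c ∈ S then g ⟨c, hc⟩ else 0

/-- a predicate `F` on full rows, depending only on coordinates in `S` -/
def DepOn (S : Finset ι') (F : (ι' → ℕ) → Prop) : Prop :=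
  ∀ g g' : ι' → ℕ, (∀ c ∈ S, g c = g' c) → (F g ↔ F g')

lemma evrep (S : Finset ι') (F : (ι' → ℕ) → Prop) (hF : DepOn S F) (ω : Ω) :
    F (fun c => B c ω) ↔ F (extend S (fun c : ↥S => B c ω)) := by
  apply hF
  intro c hc
  simp [extend, hc]

lemma splitB' (hmeasB : ∀ c, Measurable (B c))
    (hindepB : iIndepFun B μ)
    {S T : Finset ι'} (hST : Disjoint S T)
    {F G : (ι' → ℕ) → Prop} (hF : DepOn S F) (hG : DepOn T G) :
    μ ({ω | F (fun c => B c ω)} ∩ {ω | G (fun c => B c ω)}) =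
      μ {ω | F (fun c => B c ω)} * μ {ω | G (fun c => B c ω)} := by
  have hind := hindepB.indepFun_finset S T hST hmeasB
  have key := hind.measure_inter_preimage_eq_mul
    {g : ↥S → ℕ | F (extend S g)} {g : ↥T → ℕ | G (extend T g)}
    (Set.to_countable _).measurableSet (Set.to_countable _).measurableSet
  have e1 : {ω | F (fun c => B c ω)}
      = (fun a (i : ↥S) => B (↑i) a) ⁻¹' {g : ↥S → ℕ | F (extend S g)} := by
    ext ω; exact evrep S F hF ω
  have e2 : {ω | G (fun c => B c ω)}
      = (fun a (i : ↥T) => B (↑i) a) ⁻¹' {g : ↥T → ℕ | G (extend T g)} := by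
    ext ω; exact evrep T G hG ω
  rw [e1, e2, key]

end Split

section Bern

variable {Ω : Type*} [MeasurableSpace Ω] {μ : Measure Ω} [IsProbabilityMeasure μ]
  {k : ℕ} {p : ℝ} {B : ℕ × Fin (k + 1) → Ω → ℕ}

lemma Bnull (hp0 : 0 < p) (hp1 : p < 1)
    (hmeasB : ∀ c, Measurable (B c))
    (hBern1 : ∀ idx, μ {ω | B idx ω = 1} = ENNReal.ofReal p)
    (hBern0 : ∀ idx, μ {ω | B idx ω = 0} = ENNReal.ofReal (1 - p))
    (c : ℕ × Fin (k + 1)) {m : ℕ} (hm : 2 ≤ m) : μ {ω | B c ω = m} = 0 := by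
  have hm0 : MeasurableSet {ω | B c ω = 0} := hmeasB c (measurableSet_singleton 0)
  have hm1 : MeasurableSet {ω | B c ω = 1} := hmeasB c (measurableSet_singleton 1)
  have hmm : MeasurableSet {ω | B c ω = m} := hmeasB c (measurableSet_singleton m)
  have hd01 : Disjoint {ω | B c ω = 0} {ω | B c ω = 1} := by
    rw [Set.disjoint_left]; intro ω h0 h1
    simp only [Set.mem_setOf_eq] at h0 h1; omega
  have hd01m : Disjoint ({ω | B c ω = 0} ∪ {ω | B c ω = 1}) {ω | B c ω = m} := by
    rw [Set.disjoint_left]; rintro ω (h0 | h1) hm'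
    · simp only [Set.mem_setOf_eq] at h0 hm'; omega
    · simp only [Set.mem_setOf_eq] at h1 hm'; omega
  have h01 : μ ({ω | B c ω = 0} ∪ {ω | B c ω = 1}) = 1 := by
    rw [measure_union hd01 hm1, hBern0, hBern1, ← ENNReal.ofReal_add (by linarith) (by linarith)]
    norm_num
  have hle : μ (({ω | B c ω = 0} ∪ {ω | B c ω = 1}) ∪ {ω | B c ω = m}) ≤ 1 :=
    prob_le_one
  rw [measure_union hd01m hmm, h01] at hle
  have := ENNReal.le_of_add_le_add_left (by simp : (1 : ℝ≥0∞) ≠ ⊤)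
    (by simpa using hle : (1 : ℝ≥0∞) + μ {ω | B c ω = m} ≤ 1 + 0)
  exact le_antisymm this (zero_le)

lemma Bnull' (hp0 : 0 < p) (hp1 : p < 1)
    (hmeasB : ∀ c, Measurable (B c))
    (hBern1 : ∀ idx, μ {ω | B idx ω = 1} = ENNReal.ofReal p)
    (hBern0 : ∀ idx, μ {ω | B idx ω = 0} = ENNReal.ofReal (1 - p))
    (c : ℕ × Fin (k + 1)) : μ {ω | 2 ≤ B c ω} = 0 := by
  have hsub : {ω | 2 ≤ B c ω} ⊆ ⋃ m : ℕ, {ω | B c ω = m + 2} := by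
    intro ω hω
    simp only [Set.mem_setOf_eq] at hω
    exact Set.mem_iUnion.2 ⟨B c ω - 2, by simp only [Set.mem_setOf_eq]; omega⟩
  refine le_antisymm (le_trans (measure_mono hsub) (le_trans (measure_iUnion_le _) ?_)) (zero_le)
  simp [Bnull hp0 hp1 hmeasB hBern1 hBern0 c (by omega : 2 ≤ _ + 2)]

end Bern


section Binom

variable {Ω : Type*} [MeasurableSpace Ω] {μ : Measure Ω} [IsProbabilityMeasure μ]
  {k : ℕ} {p : ℝ} {B : ℕ × Fin (k + 1) → Ω → ℕ}

lemma realid (p : ℝ) (n u' : ℕ) :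
    (1 - p) * ((n.choose (u' + 1) : ℝ) * p ^ (u' + 1) * (1 - p) ^ (n - (u' + 1)))
      + p * ((n.choose u' : ℝ) * p ^ u' * (1 - p) ^ (n - u'))
    = (((n + 1).choose (u' + 1) : ℝ) * p ^ (u' + 1) * (1 - p) ^ (n + 1 - (u' + 1))) := by
  rcases lt_trichotomy (u' + 1) (n + 1) with hlt | heq | hgt
  · have hle : u' + 1 ≤ n := by omega
    obtain ⟨e, he⟩ : ∃ e, n - (u' + 1) = e := ⟨_, rfl⟩
    have h1 : n - u' = e + 1 := by omega
    have h2 : n + 1 - (u' + 1) = e + 1 := by omega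
    rw [he, h1, h2, Nat.choose_succ_succ (n := n) (k := u')]
    push_cast
    ring
  · have hu : u' = n := by omega
    subst hu
    simp [Nat.choose_succ_self, Nat.choose_self, Nat.sub_self]
    ring
  · have h1 : n < u' + 1 := by omega
    have h2 : n + 1 < u' + 1 := by omega
    rw [Nat.choose_eq_zero_of_lt h1, Nat.choose_eq_zero_of_lt h2,
        Nat.choose_eq_zero_of_lt (by omega : n < u')]
    simp

lemma binomB (hp0 : 0 < p) (hp1 : p < 1)
    (hmeasB : ∀ c, Measurable (B c))
    (hindepB : iIndepFun B μ)
    (hBern1 : ∀ idx, μ {ω | B idx ω = 1} = ENNReal.ofReal p)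
    (hBern0 : ∀ idx, μ {ω | B idx ω = 0} = ENNReal.ofReal (1 - p)) :
    ∀ (s : Finset (ℕ × Fin (k + 1))) (u : ℕ),
      μ {ω | ∑ c ∈ s, B c ω = u} =
        ENNReal.ofReal ((s.card.choose u : ℝ) * p ^ u * (1 - p) ^ (s.card - u)) := by
  intro s
  induction s using Finset.induction_on with
  | empty =>
      intro u
      cases u with
      | zero => simp
      | succ u' =>
          have : {ω : Ω | ∑ c ∈ (∅ : Finset (ℕ × Fin (k + 1))), B c ω = u' + 1} = ∅ := by
            ext ω; simp
          rw [this]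
          simp
  | insert a s ha ih =>
      intro u
      have hdisj : Disjoint ({a} : Finset (ℕ × Fin (k + 1))) s :=
        Finset.disjoint_singleton_left.2 ha
      have hdepF : ∀ m : ℕ, DepOn ({a} : Finset (ℕ × Fin (k + 1))) (fun g => g a = m) := by
        intro m g g' hgg'
        simp only [hgg' a (Finset.mem_singleton_self a)]
      have hdepG : ∀ m : ℕ, DepOn s (fun g => ∑ c ∈ s, g c = m) := by
        intro m g g' hgg'
        simp only [Finset.sum_congr rfl hgg']
      have hprod : ∀ m u' : ℕ,
          μ ({ω | B a ω = m} ∩ {ω | ∑ c ∈ s, B c ω = u'}) =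
            μ {ω | B a ω = m} * μ {ω | ∑ c ∈ s, B c ω = u'} := by
        intro m u'
        exact splitB' hmeasB hindepB hdisj (hdepF m) (hdepG u')
      have hsum : ∀ ω, ∑ c ∈ insert a s, B c ω = B a ω + ∑ c ∈ s, B c ω := by
        intro ω; exact Finset.sum_insert ha
      have hcard : (insert a s).card = s.card + 1 := Finset.card_insert_of_notMem ha
      have hmsum : Measurable (fun ω => ∑ c ∈ s, B c ω) :=
        Finset.measurable_sum s (fun c _ => hmeasB c)
      cases u with
      | zero =>
          have hev : {ω | ∑ c ∈ insert a s, B c ω = 0}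
              = {ω | B a ω = 0} ∩ {ω | ∑ c ∈ s, B c ω = 0} := by
            ext ω
            simp only [Set.mem_setOf_eq, Set.mem_inter_iff, hsum ω]
            omega
          rw [hev, hprod 0 0, hBern0, ih 0, hcard,
            ← ENNReal.ofReal_mul (by linarith)]
          congr 1
          simp only [Nat.choose_zero_right, Nat.cast_one, Nat.sub_zero, pow_zero]
          ring
      | succ u' =>
          set A0 := {ω | B a ω = 0} ∩ {ω | ∑ c ∈ s, B c ω = u' + 1} with hA0
          set A1 := {ω | B a ω = 1} ∩ {ω | ∑ c ∈ s, B c ω = u'} with hA1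
          have hmA0 : MeasurableSet A0 :=
            (hmeasB a (measurableSet_singleton 0)).inter (hmsum (measurableSet_singleton _))
          have hmA1 : MeasurableSet A1 :=
            (hmeasB a (measurableSet_singleton 1)).inter (hmsum (measurableSet_singleton _))
          have hd : Disjoint A0 A1 := by
            rw [Set.disjoint_left]
            rintro ω ⟨h0, -⟩ ⟨h1, -⟩
            simp only [Set.mem_setOf_eq] at h0 h1
            omega
          have hsub1 : {ω | ∑ c ∈ insert a s, B c ω = u' + 1}
              ⊆ (A0 ∪ A1) ∪ {ω | 2 ≤ B a ω} := by
            intro ω hω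
            simp only [Set.mem_setOf_eq, hsum ω] at hω
            rcases Nat.lt_or_ge (B a ω) 2 with hb | hb
            · have hb01 : B a ω = 0 ∨ B a ω = 1 := by omega
              rcases hb01 with h0 | h1
              · exact Or.inl (Or.inl ⟨h0, by simp only [Set.mem_setOf_eq]; omega⟩)
              · exact Or.inl (Or.inr ⟨h1, by simp only [Set.mem_setOf_eq]; omega⟩)
            · exact Or.inr hb
          have hsub2 : A0 ∪ A1 ⊆ {ω | ∑ c ∈ insert a s, B c ω = u' + 1} := by
            rintro ω (⟨h0, hs0⟩ | ⟨h1, hs1⟩) <;>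
              simp only [Set.mem_setOf_eq] at * <;>
              · rw [hsum ω]; omega
          have hEeq : μ {ω | ∑ c ∈ insert a s, B c ω = u' + 1} = μ A0 + μ A1 := by
            have hN : μ {ω | 2 ≤ B a ω} = 0 := Bnull' hp0 hp1 hmeasB hBern1 hBern0 a
            have hle1 : μ {ω | ∑ c ∈ insert a s, B c ω = u' + 1} ≤ μ (A0 ∪ A1) := by
              calc μ {ω | ∑ c ∈ insert a s, B c ω = u' + 1}
                  ≤ μ ((A0 ∪ A1) ∪ {ω | 2 ≤ B a ω}) := measure_mono hsub1
                _ ≤ μ (A0 ∪ A1) + μ {ω | 2 ≤ B a ω} := measure_union_le _ _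
                _ = μ (A0 ∪ A1) := by rw [hN, add_zero]
            have hle2 : μ (A0 ∪ A1) ≤ μ {ω | ∑ c ∈ insert a s, B c ω = u' + 1} :=
              measure_mono hsub2
            rw [le_antisymm hle1 hle2, measure_union hd hmA1]
          rw [hEeq, hA0, hA1, hprod 0 (u' + 1), hprod 1 u', hBern0, hBern1,
            ih (u' + 1), ih u', hcard,
            ← ENNReal.ofReal_mul (by linarith), ← ENNReal.ofReal_mul (by linarith),
            ← ENNReal.ofReal_add]
          · congr 1
            exact realid p s.card u'
          · exact mul_nonneg (by linarith)
              (mul_nonneg (mul_nonneg (Nat.cast_nonneg _) (pow_nonneg hp0.le _))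
                (pow_nonneg (by linarith) _))
          · exact mul_nonneg hp0.le
              (mul_nonneg (mul_nonneg (Nat.cast_nonneg _) (pow_nonneg hp0.le _))
                (pow_nonneg (by linarith) _))

end Binom


section Laws

variable {Ω : Type*} [MeasurableSpace Ω] {μ : Measure Ω} [IsProbabilityMeasure μ]
  {Ω₂ : Type*} [MeasurableSpace Ω₂] {μ₂ : Measure Ω₂} [IsProbabilityMeasure μ₂]
  {k : ℕ} {p : ℝ} {B : ℕ × Fin (k + 1) → Ω → ℕ} {X : ℕ → Ω → ℤ} {X₂ : ℕ → Ω₂ → ℤ}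

lemma lawX (hp0 : 0 < p) (hp1 : p < 1)
    (hmeasB : ∀ c, Measurable (B c))
    (hindepB : iIndepFun B μ)
    (hBern1 : ∀ idx, μ {ω | B idx ω = 1} = ENNReal.ofReal p)
    (hBern0 : ∀ idx, μ {ω | B idx ω = 0} = ENNReal.ofReal (1 - p))
    (hX : ∀ i ω, X i ω = (∑ j : Fin (k + 1), (B (i, j) ω : ℤ)) - 1)
    (n : ℕ) (u : ℕ) :
    μ {ω | X n ω = (u : ℤ) - 1} =
      ENNReal.ofReal (((k + 1).choose u : ℝ) * p ^ u * (1 - p) ^ (k + 1 - u)) := by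
  have hev : {ω | X n ω = (u : ℤ) - 1}
      = {ω | ∑ c ∈ ({n} ×ˢ (Finset.univ : Finset (Fin (k + 1)))), B c ω = u} := by
    ext ω
    simp only [Set.mem_setOf_eq, hX n ω, Finset.sum_product, Finset.sum_singleton]
    have hcast : (∑ j : Fin (k + 1), (B (n, j) ω : ℤ))
        = ((∑ j : Fin (k + 1), B (n, j) ω : ℕ) : ℤ) := by push_cast; rfl
    rw [hcast]
    omega
  have hcard : (({n} ×ˢ (Finset.univ : Finset (Fin (k + 1))))).card = k + 1 := by simp
  rw [hev, binomB hp0 hp1 hmeasB hindepB hBern1 hBern0, hcard]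

lemma Xev_empty (hX : ∀ i ω, X i ω = (∑ j : Fin (k + 1), (B (i, j) ω : ℤ)) - 1)
    (n : ℕ) {d : ℤ} (hd : d < -1) : {ω | X n ω = d} = ∅ := by
  ext ω
  simp only [Set.mem_setOf_eq, Set.mem_empty_iff_false, iff_false, hX n ω]
  intro hcon
  have hnn : (0 : ℤ) ≤ ∑ j : Fin (k + 1), (B (n, j) ω : ℤ) :=
    Finset.sum_nonneg fun j _ => Int.natCast_nonneg _
  omega

lemma X₂null (hp0 : 0 < p) (hp1 : p < 1)
    (hmeasX₂ : ∀ n, Measurable (X₂ n))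
    (hdistX₂ : ∀ n, ∀ u : ℕ, u ≤ k + 1 →
      μ₂ {ω | X₂ n ω = (u : ℤ) - 1} =
        ENNReal.ofReal (((k + 1).choose u : ℝ) * p ^ u * (1 - p) ^ (k + 1 - u)))
    (t : ℕ) {d : ℤ} (hd : ∀ u : ℕ, u ≤ k + 1 → d ≠ (u : ℤ) - 1) :
    μ₂ {ω | X₂ t ω = d} = 0 := by
  set G := ⋃ u ∈ Finset.range (k + 2), {ω | X₂ t ω = (u : ℤ) - 1} with hG
  have hmG : MeasurableSet G :=
    MeasurableSet.biUnion (Finset.range (k + 2)).countable_toSet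
      (fun u _ => hmeasX₂ t (measurableSet_singleton _))
  have hdisjG : (↑(Finset.range (k + 2)) : Set ℕ).PairwiseDisjoint
      (fun u : ℕ => {ω | X₂ t ω = (u : ℤ) - 1}) := by
    intro u hu u' hu' huu'
    simp only [Function.onFun]
    rw [Set.disjoint_left]
    intro ω h1 h2
    simp only [Set.mem_setOf_eq] at h1 h2
    apply huu'
    omega
  have hμG : μ₂ G = 1 := by
    rw [hG, measure_biUnion_finset hdisjG
      (fun u _ => hmeasX₂ t (measurableSet_singleton _))]
    have hterm : ∀ u ∈ Finset.range (k + 2), μ₂ {ω | X₂ t ω = (u : ℤ) - 1}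
        = ENNReal.ofReal (((k + 1).choose u : ℝ) * p ^ u * (1 - p) ^ (k + 1 - u)) := by
      intro u hu
      simp only [Finset.mem_range] at hu
      exact hdistX₂ t u (by omega)
    rw [Finset.sum_congr rfl hterm, ← ENNReal.ofReal_sum_of_nonneg]
    · have hbin : ∑ u ∈ Finset.range (k + 2),
          (((k + 1).choose u : ℝ) * p ^ u * (1 - p) ^ (k + 1 - u)) = 1 := by
        have hap := add_pow p (1 - p) (k + 1)
        simp only [add_sub_cancel, one_pow] at hap
        calc ∑ u ∈ Finset.range (k + 2), (((k + 1).choose u : ℝ) * p ^ u * (1 - p) ^ (k + 1 - u))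
            = ∑ m ∈ Finset.range (k + 1 + 1),
                p ^ m * (1 - p) ^ (k + 1 - m) * ((k + 1).choose m : ℝ) :=
              Finset.sum_congr (by norm_num) fun u _ => by ring
          _ = 1 := hap.symm
      rw [hbin, ENNReal.ofReal_one]
    · intro u hu
      exact mul_nonneg (mul_nonneg (Nat.cast_nonneg _) (pow_nonneg hp0.le _))
        (pow_nonneg (by linarith) _)
  have hcompl : μ₂ Gᶜ = 0 := by
    rw [measure_compl hmG (measure_ne_top _ _), hμG, measure_univ, tsub_self]
  refine le_antisymm (le_trans (measure_mono ?_) hcompl.le) (zero_le)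
  intro ω hω
  simp only [Set.mem_setOf_eq] at hω
  intro hcon
  rw [hG] at hcon
  simp only [Set.mem_iUnion, Finset.mem_coe, Finset.mem_range, Set.mem_setOf_eq] at hcon
  obtain ⟨u, hu, hval⟩ := hcon
  exact hd u (by omega) (by rw [← hω, hval])


lemma lawEq (hp0 : 0 < p) (hp1 : p < 1)
    (hmeasB : ∀ c, Measurable (B c))
    (hindepB : iIndepFun B μ)
    (hBern1 : ∀ idx, μ {ω | B idx ω = 1} = ENNReal.ofReal p)
    (hBern0 : ∀ idx, μ {ω | B idx ω = 0} = ENNReal.ofReal (1 - p))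
    (hX : ∀ i ω, X i ω = (∑ j : Fin (k + 1), (B (i, j) ω : ℤ)) - 1)
    (hmeasX₂ : ∀ n, Measurable (X₂ n))
    (hdistX₂ : ∀ n, ∀ u : ℕ, u ≤ k + 1 →
      μ₂ {ω | X₂ n ω = (u : ℤ) - 1} =
        ENNReal.ofReal (((k + 1).choose u : ℝ) * p ^ u * (1 - p) ^ (k + 1 - u)))
    (n t : ℕ) (d : ℤ) :
    μ {ω | X n ω = d} = μ₂ {ω | X₂ t ω = d} := by
  by_cases hd : ∃ u : ℕ, u ≤ k + 1 ∧ d = (u : ℤ) - 1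
  · obtain ⟨u, hu, rfl⟩ := hd
    rw [lawX hp0 hp1 hmeasB hindepB hBern1 hBern0 hX, hdistX₂ t u hu]
  · push_neg at hd
    rw [X₂null hp0 hp1 hmeasX₂ hdistX₂ t (fun u hu => hd u hu)]
    rcases lt_or_ge d (-1) with hlt | hge
    · rw [Xev_empty hX n hlt]
      simp
    · have hdd : d = (((d + 1).toNat : ℕ) : ℤ) - 1 := by omega
      rw [hdd, lawX hp0 hp1 hmeasB hindepB hBern1 hBern0 hX]
      have hgt : k + 1 < (d + 1).toNat := by
        by_contra hcon
        exact hd (d + 1).toNat (by omega) (by omega)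
      rw [Nat.choose_eq_zero_of_lt hgt]
      simp

lemma prodX (hmeasB : ∀ c, Measurable (B c))
    (hindepB : iIndepFun B μ)
    (hX : ∀ i ω, X i ω = (∑ j : Fin (k + 1), (B (i, j) ω : ℤ)) - 1)
    (n₀ : ℕ) :
    ∀ (L : ℕ) (v : ℕ → ℤ),
      μ (⋂ t ∈ Finset.range L, {ω | X (n₀ + 1 + t) ω = v t}) =
        ∏ t ∈ Finset.range L, μ {ω | X (n₀ + 1 + t) ω = v t} := by
  intro L
  induction L with
  | zero => intro v; simp
  | succ L ih =>
      intro v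
      have hrange : Finset.range (L + 1) = insert L (Finset.range L) := Finset.range_add_one
      rw [hrange, Finset.set_biInter_insert, Finset.prod_insert (by simp)]
      -- representation of the two parts as cylinder events
      set Fl : (ℕ × Fin (k + 1) → ℕ) → Prop :=
        fun g => (∑ j : Fin (k + 1), (g (n₀ + 1 + L, j) : ℤ)) - 1 = v L with hFl
      set Fp : (ℕ × Fin (k + 1) → ℕ) → Prop :=
        fun g => ∀ t, t < L → (∑ j : Fin (k + 1), (g (n₀ + 1 + t, j) : ℤ)) - 1 = v t with hFp
      have hdepFl : DepOn (({n₀ + 1 + L} : Finset ℕ) ×ˢ Finset.univ) Fl := by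
        intro g g' hgg'
        have : ∀ j : Fin (k + 1), g (n₀ + 1 + L, j) = g' (n₀ + 1 + L, j) := by
          intro j
          exact hgg' _ (by simp [Finset.mem_product])
        simp only [hFl, this]
      have hdepFp : DepOn ((Finset.Icc (n₀ + 1) (n₀ + L) : Finset ℕ) ×ˢ Finset.univ) Fp := by
        intro g g' hgg'
        have hval : ∀ t, t < L → ∀ j : Fin (k + 1),
            g (n₀ + 1 + t, j) = g' (n₀ + 1 + t, j) := by
          intro t ht j
          exact hgg' _ (by simp only [Finset.mem_product, Finset.mem_Icc,
            Finset.mem_univ, and_true]; omega)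
        simp only [hFp]
        have hsum : ∀ t, t < L → (∑ j : Fin (k + 1), (g (n₀ + 1 + t, j) : ℤ))
            = ∑ j : Fin (k + 1), (g' (n₀ + 1 + t, j) : ℤ) := fun t ht =>
          Finset.sum_congr rfl fun j _ => by rw [hval t ht j]
        constructor <;> intro hh t ht
        · rw [← hsum t ht]; exact hh t ht
        · rw [hsum t ht]; exact hh t ht
      have hevl : {ω | X (n₀ + 1 + L) ω = v L} = {ω | Fl (fun c => B c ω)} := by
        ext ω
        simp only [Set.mem_setOf_eq, hX, hFl]
      have hevp : (⋂ t ∈ Finset.range L, {ω | X (n₀ + 1 + t) ω = v t})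
          = {ω | Fp (fun c => B c ω)} := by
        ext ω
        simp only [Set.mem_iInter, Set.mem_setOf_eq, Finset.mem_range, hX, hFp]
      have hdisj : Disjoint (({n₀ + 1 + L} : Finset ℕ) ×ˢ (Finset.univ : Finset (Fin (k + 1))))
          ((Finset.Icc (n₀ + 1) (n₀ + L) : Finset ℕ) ×ˢ Finset.univ) := by
        rw [Finset.disjoint_left]
        rintro ⟨m, j'⟩ h1 h2
        simp only [Finset.mem_product, Finset.mem_singleton, Finset.mem_Icc,
          Finset.mem_univ, and_true] at h1 h2
        omega
      rw [hevl, hevp, splitB' hmeasB hindepB hdisj hdepFl hdepFp, ← hevl, ← hevp, ih v]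

lemma prodX₂ (hmeasX₂ : ∀ n, Measurable (X₂ n))
    (hindepX₂ : iIndepFun X₂ μ₂)
    (L : ℕ) (v : ℕ → ℤ) :
    μ₂ (⋂ t ∈ Finset.range L, {ω | X₂ t ω = v t}) =
      ∏ t ∈ Finset.range L, μ₂ {ω | X₂ t ω = v t} := by
  exact hindepX₂.meas_biInter
    (fun t _ => ⟨{v t}, measurableSet_singleton _, rfl⟩)

lemma measX (hmeasB : ∀ c, Measurable (B c))
    (hX : ∀ i ω, X i ω = (∑ j : Fin (k + 1), (B (i, j) ω : ℤ)) - 1) :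
    ∀ n, Measurable (X n) := by
  intro n
  have hfe : X n = fun ω => (∑ j : Fin (k + 1), (B (n, j) ω : ℤ)) - 1 := funext (hX n)
  rw [hfe]
  apply Measurable.sub ?_ measurable_const
  apply Finset.measurable_sum
  intro j _
  exact (measurable_of_countable (fun m : ℕ => (m : ℤ))).comp (hmeasB (n, j))

lemma hitEq (hp0 : 0 < p) (hp1 : p < 1)
    (hmeasB : ∀ c, Measurable (B c))
    (hindepB : iIndepFun B μ)
    (hBern1 : ∀ idx, μ {ω | B idx ω = 1} = ENNReal.ofReal p)
    (hBern0 : ∀ idx, μ {ω | B idx ω = 0} = ENNReal.ofReal (1 - p))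
    (hX : ∀ i ω, X i ω = (∑ j : Fin (k + 1), (B (i, j) ω : ℤ)) - 1)
    (hmeasX₂ : ∀ n, Measurable (X₂ n))
    (hindepX₂ : iIndepFun X₂ μ₂)
    (hdistX₂ : ∀ n, ∀ u : ℕ, u ≤ k + 1 →
      μ₂ {ω | X₂ n ω = (u : ℤ) - 1} =
        ENNReal.ofReal (((k + 1).choose u : ℝ) * p ^ u * (1 - p) ^ (k + 1 - u)))
    (n₀ : ℕ) (y' : ℤ) (h : ℕ) :
    μ {ω | Hits y' (fun t => X (n₀ + 1 + t) ω) h} =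
      μ₂ {ω | Hits y' (fun t => X₂ t ω) h} := by
  classical
  set ext' : (Fin h → ℤ) → ℕ → ℤ :=
    fun v t => if ht : t < h then v ⟨t, ht⟩ else 0 with hext'
  set P : (Fin h → ℤ) → Prop := fun v => Hits y' (ext' v) h with hP
  have hcong : ∀ (w : ℕ → ℤ), Hits y' w h ↔ P (fun t : Fin h => w t.1) := by
    intro w
    rw [hP]
    apply Hits_congr
    intro t ht
    simp only [hext', dif_pos ht]
  have hev1 : {ω | Hits y' (fun t => X (n₀ + 1 + t) ω) h}
      = {ω | P (fun t : Fin h => X (n₀ + 1 + t.1) ω)} := by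
    ext ω
    exact hcong (fun t => X (n₀ + 1 + t) ω)
  have hev2 : {ω | Hits y' (fun t => X₂ t ω) h}
      = {ω | P (fun t : Fin h => X₂ t.1 ω)} := by
    ext ω
    exact hcong (fun t => X₂ t ω)
  rw [hev1, hev2,
    meas_cyl μ (fun (t : Fin h) ω => X (n₀ + 1 + t.1) ω)
      (fun t => measX hmeasB hX _) P,
    meas_cyl μ₂ (fun (t : Fin h) ω => X₂ t.1 ω) (fun t => hmeasX₂ _) P]
  apply tsum_congr
  intro v
  by_cases hPv : P v
  · rw [if_pos hPv, if_pos hPv]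
    have hint1 : (⋂ t : Fin h, (fun ω => X (n₀ + 1 + t.1) ω) ⁻¹' {v t})
        = ⋂ t ∈ Finset.range h, {ω | X (n₀ + 1 + t) ω = ext' v t} := by
      ext ω
      simp only [Set.mem_iInter, Set.mem_preimage, Set.mem_singleton_iff,
        Finset.mem_range, Set.mem_setOf_eq]
      constructor
      · intro hh t ht
        rw [hext']
        simp only [dif_pos ht]
        exact hh ⟨t, ht⟩
      · intro hh t
        have := hh t.1 t.2
        rw [hext'] at this
        simpa only [dif_pos t.2] using this
    have hint2 : (⋂ t : Fin h, (fun ω => X₂ t.1 ω) ⁻¹' {v t})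
        = ⋂ t ∈ Finset.range h, {ω | X₂ t ω = ext' v t} := by
      ext ω
      simp only [Set.mem_iInter, Set.mem_preimage, Set.mem_singleton_iff,
        Finset.mem_range, Set.mem_setOf_eq]
      constructor
      · intro hh t ht
        rw [hext']
        simp only [dif_pos ht]
        exact hh ⟨t, ht⟩
      · intro hh t
        have := hh t.1 t.2
        rw [hext'] at this
        simpa only [dif_pos t.2] using this
    rw [hint1, hint2, prodX hmeasB hindepB hX n₀ h (ext' v),
      prodX₂ hmeasX₂ hindepX₂ h (ext' v)]
    exact Finset.prod_congr rfl fun t _ =>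
      lawEq hp0 hp1 hmeasB hindepB hBern1 hBern0 hX hmeasX₂ hdistX₂ _ _ _
  · rw [if_neg hPv, if_neg hPv]

lemma measHitsSet (W : ℕ → Ω → ℤ) (hm : ∀ t, Measurable (W t)) (y' : ℤ) (h : ℕ) :
    MeasurableSet {ω | Hits y' (fun t => W t ω) h} := by
  classical
  have hev : {ω | Hits y' (fun t => W t ω) h}
      = (fun ω (t : Fin h) => W t.1 ω) ⁻¹'
        {v : Fin h → ℤ | Hits y' (fun t => if ht : t < h then v ⟨t, ht⟩ else 0) h} := by
    ext ω
    simp only [Set.mem_setOf_eq, Set.mem_preimage]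
    exact Hits_congr (fun t ht => by simp [dif_pos ht])
  rw [hev]
  exact (measurable_pi_lambda (fun ω (t : Fin h) => W t.1 ω) (fun t => hm t.1))
    (Set.to_countable _).measurableSet

end Laws

/-- the reflected walk as a function of the array of losses -/
def Ysim (k : ℕ) (g : ℕ × Fin (k + 1) → ℕ) : ℕ → ℤ
  | 0 => 0
  | n + 1 => max (Ysim k g n + ((∑ j : Fin (k + 1), (g (n + 1, j) : ℤ)) - 1)) 0

lemma Ysim_congr {k : ℕ} {g g' : ℕ × Fin (k + 1) → ℕ} :
    ∀ {n : ℕ}, (∀ c : ℕ × Fin (k + 1), 1 ≤ c.1 → c.1 ≤ n → g c = g' c) →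
      Ysim k g n = Ysim k g' n
  | 0, _ => rfl
  | n + 1, hagree => by
      rw [Ysim, Ysim,
        Ysim_congr (fun c h1 h2 => hagree c h1 (h2.trans (Nat.le_succ n))),
        Finset.sum_congr rfl (fun j _ => by rw [hagree (n + 1, j) (by omega) (le_refl _)])]

end Stmt9Aux


open Stmt9Aux in
/-- Distribution of the decoding delay of a packet sent in position `j` of block `i`:
`P(D_j = (k-j) + h(k+1) | B_{i,j} = 1)
  = ∑_{y≥0} ∑_{u=0}^{k} C(k,u) pᵘ (1-p)^{k-u} P(H_{y+u} = h) P(Y_{i-1} = y)`,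
where `H` is the hitting time of 0 of an independent copy of the reflected walk. -/
theorem stmt_9 {Ω : Type*} [MeasurableSpace Ω] (μ : Measure Ω) [IsProbabilityMeasure μ]
    {Ω₂ : Type*} [MeasurableSpace Ω₂] (μ₂ : Measure Ω₂) [IsProbabilityMeasure μ₂]
    (k : ℕ) (hk : 1 ≤ k) (p : ℝ) (hp0 : 0 < p) (hp1 : p < 1)
    -- the i.i.d. Bernoulli array of packet losses and the associated reflected walk
    (B : ℕ × Fin (k + 1) → Ω → ℕ)
    (hmeasB : ∀ idx, Measurable (B idx))
    (hindepB : iIndepFun B μ)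
    (hBern1 : ∀ idx, μ {ω | B idx ω = 1} = ENNReal.ofReal p)
    (hBern0 : ∀ idx, μ {ω | B idx ω = 0} = ENNReal.ofReal (1 - p))
    (X : ℕ → Ω → ℤ)
    (hX : ∀ i ω, X i ω = (∑ j : Fin (k + 1), (B (i, j) ω : ℤ)) - 1)
    (Y : ℕ → Ω → ℤ)
    (hY0 : ∀ ω, Y 0 ω = 0)
    (hYs : ∀ n ω, Y (n + 1) ω = max (Y n ω + X (n + 1) ω) 0)
    -- an independent copy of the reflected walk, started at `y`, with its hitting times of 0
    (X₂ : ℕ → Ω₂ → ℤ)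
    (hmeasX₂ : ∀ n, Measurable (X₂ n))
    (hindepX₂ : iIndepFun X₂ μ₂)
    (hdistX₂ : ∀ n, ∀ u : ℕ, u ≤ k + 1 →
      μ₂ {ω | X₂ n ω = (u : ℤ) - 1} =
        ENNReal.ofReal (((k + 1).choose u : ℝ) * p ^ u * (1 - p) ^ (k + 1 - u)))
    (Y₂ : ℕ → ℕ → Ω₂ → ℤ)
    (hY₂0 : ∀ y ω, Y₂ y 0 ω = (y : ℤ))
    (hY₂s : ∀ y n ω, Y₂ y (n + 1) ω = max (Y₂ y n ω + X₂ n ω) 0)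
    (H : ℕ → Ω₂ → ℕ∞)
    (hH : ∀ y ω, H y ω = sInf {n : ℕ∞ | ∃ h : ℕ, n = (h : ℕ∞) ∧ Y₂ y h ω = 0})
    -- the decoding delay of the packet sent in position `j` of block `i`
    (i : ℕ) (hi : 1 ≤ i)
    (j : ℕ) (hj : j < k)
    (D : Ω → ℕ∞)
    (hD : ∀ ω, D ω = ((k - j : ℕ) : ℕ∞) +
      ((k + 1 : ℕ) : ℕ∞) * sInf {n : ℕ∞ | ∃ m : ℕ, n = (m : ℕ∞) ∧ Y (i + m) ω = 0}) :
    ∀ h : ℕ,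
      μ[|{ω | B (i, ⟨j, Nat.lt_succ_of_lt hj⟩) ω = 1}]
          {ω | D ω = ((k - j + h * (k + 1) : ℕ) : ℕ∞)} =
        ∑' y : ℕ, ∑ u ∈ Finset.range (k + 1),
          ENNReal.ofReal ((k.choose u : ℝ) * p ^ u * (1 - p) ^ (k - u)) *
            μ₂ {ω | H (y + u) ω = (h : ℕ∞)} *
            μ {ω | Y (i - 1) ω = (y : ℤ)} := by
  intro h
  classical
  set j₀ : Fin (k + 1) := ⟨j, Nat.lt_succ_of_lt hj⟩ with hj₀
  set A : Set Ω := {ω | B (i, j₀) ω = 1} with hAdef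
  have hmA : MeasurableSet A := hmeasB (i, j₀) (measurableSet_singleton 1)
  have hmX : ∀ n, Measurable (X n) := measX hmeasB hX
  have hmY : ∀ n, Measurable (Y n) := by
    intro n
    induction n with
    | zero =>
        have hfe : Y 0 = fun _ => (0 : ℤ) := funext hY0
        rw [hfe]; exact measurable_const
    | succ n ih =>
        have hfe : Y (n + 1) = fun ω => max (Y n ω + X (n + 1) ω) 0 := funext (hYs n)
        rw [hfe]
        exact (ih.add (hmX (n + 1))).max measurable_const
  have hYnn : ∀ n ω, 0 ≤ Y n ω := by
    intro n
    induction n with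
    | zero => intro ω; rw [hY0 ω]
    | succ n ih => intro ω; rw [hYs n ω]; exact le_max_right _ _
  have hYwalk : ∀ ω m, Y (i + m) ω = walk (Y i ω) (fun t => X (i + 1 + t) ω) m := by
    intro ω m
    induction m with
    | zero => rfl
    | succ m ih =>
        have h1 : i + (m + 1) = (i + m) + 1 := rfl
        rw [h1, hYs (i + m) ω, ih, show i + m + 1 = i + 1 + m from by omega]
        rfl
  have hY₂walk : ∀ (y' : ℕ) ω m, Y₂ y' m ω = walk (y' : ℤ) (fun t => X₂ t ω) m := by
    intro y' ω m
    induction m with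
    | zero => rw [hY₂0]; rfl
    | succ m ih => rw [hY₂s, ih]; rfl
  have hHev : ∀ y' : ℕ, {ω | H y' ω = (h : ℕ∞)}
      = {ω | Hits (y' : ℤ) (fun t => X₂ t ω) h} := by
    intro y'
    ext ω
    simp only [Set.mem_setOf_eq, hH y' ω]
    rw [sInf_char]
    unfold Hits
    simp only [hY₂walk y' ω]
  have hkey : ∀ s : ℕ∞, ((k - j : ℕ) : ℕ∞) + ((k + 1 : ℕ) : ℕ∞) * s
      = ((k - j + h * (k + 1) : ℕ) : ℕ∞) ↔ s = (h : ℕ∞) := by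
    intro s
    induction s using ENat.recTopCoe with
    | top =>
        have hmt : ((k + 1 : ℕ) : ℕ∞) * (⊤ : ℕ∞) = ⊤ :=
          WithTop.mul_top (Nat.cast_ne_zero.mpr (Nat.succ_ne_zero k))
        rw [hmt, add_top]
        constructor
        · intro habs
          exact absurd habs.symm (ENat.coe_ne_top _)
        · intro habs
          exact absurd habs.symm (ENat.coe_ne_top h)
    | coe m =>
        constructor
        · intro heq
          rw [← Nat.cast_mul, ← Nat.cast_add, Nat.cast_inj] at heq
          have h4 := Nat.add_left_cancel heq
          have h5 : (k + 1) * m = (k + 1) * h := by rw [h4, Nat.mul_comm]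
          have h3 : m = h := Nat.eq_of_mul_eq_mul_left (Nat.succ_pos k) h5
          exact_mod_cast h3
        · intro heq
          have h3 : m = h := by exact_mod_cast heq
          subst h3
          rw [← Nat.cast_mul, ← Nat.cast_add, Nat.cast_inj]
          ring
  have hDev : {ω | D ω = ((k - j + h * (k + 1) : ℕ) : ℕ∞)}
      = {ω | Y (i + h) ω = 0 ∧ ∀ m, m < h → Y (i + m) ω ≠ 0} := by
    ext ω
    simp only [Set.mem_setOf_eq, hD ω]
    rw [hkey, sInf_char]
  set Usum : Ω → ℕ := fun ω => ∑ j' ∈ Finset.univ.erase j₀, B (i, j') ω with hUsum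
  have hmUsum : Measurable Usum := Finset.measurable_sum _ (fun c _ => hmeasB (i, c))
  set Wst : ℕ → Set Ω :=
    fun n' => {ω | Hits ((n' : ℕ) : ℤ) (fun t => X (i + 1 + t) ω) h} with hWst
  set V : ℕ → ℕ → Set Ω :=
    fun y u => A ∩ ({ω | Y (i - 1) ω = (y : ℤ)} ∩ ({ω | Usum ω = u} ∩ Wst (y + u))) with hV
  have hXi : ∀ ω, ω ∈ A → X i ω = (Usum ω : ℤ) := by
    intro ω hωA
    rw [hX i ω]
    have hsplit : (B (i, j₀) ω : ℤ) + ∑ j' ∈ Finset.univ.erase j₀, (B (i, j') ω : ℤ)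
        = ∑ j' : Fin (k + 1), (B (i, j') ω : ℤ) :=
      Finset.add_sum_erase Finset.univ (fun j' : Fin (k + 1) => (B (i, j') ω : ℤ))
        (Finset.mem_univ j₀)
    rw [← hsplit]
    have hb1 : B (i, j₀) ω = 1 := hωA
    rw [hb1, hUsum]
    push_cast
    ring
  have hYieq : ∀ ω (y u : ℕ), ω ∈ A → Y (i - 1) ω = (y : ℤ) → Usum ω = u →
      Y i ω = ((y + u : ℕ) : ℤ) := by
    intro ω y u hωA hy hu
    have hi1 : i - 1 + 1 = i := by omega
    have hstep := hYs (i - 1) ω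
    rw [hi1] at hstep
    rw [hstep, hXi ω hωA, hy, hu,
      max_eq_left (add_nonneg (Int.natCast_nonneg _) (Int.natCast_nonneg _))]
    push_cast
    ring
  have hbridge : ∀ ω (y u : ℕ), ω ∈ A → Y (i - 1) ω = (y : ℤ) → Usum ω = u →
      ((Y (i + h) ω = 0 ∧ ∀ m, m < h → Y (i + m) ω ≠ 0) ↔ ω ∈ Wst (y + u)) := by
    intro ω y u hωA hy hu
    have hrw : ∀ m, Y (i + m) ω
        = walk (((y + u : ℕ) : ℤ)) (fun t => X (i + 1 + t) ω) m := by
      intro m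
      rw [hYwalk ω m, hYieq ω y u hωA hy hu]
    simp only [hWst, Set.mem_setOf_eq, Hits, hrw]
  have hpieces : A ∩ {ω | Y (i + h) ω = 0 ∧ ∀ m, m < h → Y (i + m) ω ≠ 0}
      = ⋃ yu : ℕ × ℕ, V yu.1 yu.2 := by
    ext ω
    simp only [Set.mem_inter_iff, Set.mem_iUnion, hV, Set.mem_setOf_eq]
    constructor
    · rintro ⟨hωA, hPf⟩
      refine ⟨((Y (i - 1) ω).toNat, Usum ω), hωA,
        (Int.toNat_of_nonneg (hYnn _ _)).symm, rfl, ?_⟩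
      exact (hbridge ω _ _ hωA (Int.toNat_of_nonneg (hYnn _ _)).symm rfl).1 hPf
    · rintro ⟨⟨y, u⟩, hωA, hy, hu, hWu⟩
      exact ⟨hωA, (hbridge ω y u hωA hy hu).2 hWu⟩
  have hmV : ∀ yu : ℕ × ℕ, MeasurableSet (V yu.1 yu.2) := by
    rintro ⟨y, u⟩
    refine hmA.inter ((hmY (i - 1) (measurableSet_singleton _)).inter
      ((hmUsum (measurableSet_singleton _)).inter ?_))
    exact measHitsSet (fun t => X (i + 1 + t)) (fun t => hmX _) _ h
  have hdisjV : Pairwise (Function.onFun Disjoint fun yu : ℕ × ℕ => V yu.1 yu.2) := by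
    rintro ⟨y, u⟩ ⟨y', u'⟩ hne
    simp only [Function.onFun]
    rw [Set.disjoint_left]
    rintro ω ⟨-, hy, hu, -⟩ ⟨-, hy', hu', -⟩
    apply hne
    have hyy : y = y' := by exact_mod_cast hy.symm.trans hy'
    have huu : u = u' := hu.symm.trans hu'
    simp [Prod.ext_iff, hyy, huu]
  have hYsimEq : ∀ (ω : Ω) (n : ℕ), Y n ω = Ysim k (fun c => B c ω) n := by
    intro ω n
    induction n with
    | zero => rw [hY0]; rfl
    | succ n ih => rw [hYs, ih, hX]; rfl
  have hfact : ∀ y u : ℕ, μ (V y u)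
      = ENNReal.ofReal p *
        (ENNReal.ofReal ((k.choose u : ℝ) * p ^ u * (1 - p) ^ (k - u)) *
          μ₂ {ω | H (y + u) ω = (h : ℕ∞)} * μ {ω | Y (i - 1) ω = (y : ℤ)}) := by
    intro y u
    -- predicates on full rows
    set F1 : (ℕ × Fin (k + 1) → ℕ) → Prop := fun g => g (i, j₀) = 1 with hF1
    set F2 : (ℕ × Fin (k + 1) → ℕ) → Prop :=
      fun g => ∑ j' ∈ Finset.univ.erase j₀, g (i, j') = u with hF2
    set F3 : (ℕ × Fin (k + 1) → ℕ) → Prop :=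
      fun g => Ysim k g (i - 1) = (y : ℤ) with hF3
    set F4 : (ℕ × Fin (k + 1) → ℕ) → Prop :=
      fun g => Hits (((y + u : ℕ)) : ℤ)
        (fun t => (∑ j' : Fin (k + 1), (g (i + 1 + t, j') : ℤ)) - 1) h with hF4
    -- index sets
    set S2 : Finset (ℕ × Fin (k + 1)) := {i} ×ˢ Finset.univ.erase j₀ with hS2
    set S3 : Finset (ℕ × Fin (k + 1)) := Finset.Icc 1 (i - 1) ×ˢ Finset.univ with hS3
    set S4 : Finset (ℕ × Fin (k + 1)) := Finset.Icc (i + 1) (i + h) ×ˢ Finset.univ with hS4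
    set T1 : Finset (ℕ × Fin (k + 1)) := Finset.Icc i (i + h) ×ˢ Finset.univ with hT1
    -- dependence proofs
    have hdep1 : DepOn ({(i, j₀)} : Finset (ℕ × Fin (k + 1))) F1 := by
      intro g g' hgg'
      simp only [hF1, hgg' (i, j₀) (Finset.mem_singleton_self _)]
    have hdep2 : DepOn S2 F2 := by
      intro g g' hgg'
      have hagree : ∀ j' ∈ Finset.univ.erase j₀, g (i, j') = g' (i, j') := fun j' hj' =>
        hgg' (i, j') (Finset.mem_product.2 ⟨Finset.mem_singleton_self i, hj'⟩)
      simp only [hF2, Finset.sum_congr rfl hagree]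
    have hdep3 : DepOn S3 F3 := by
      intro g g' hgg'
      have hc : Ysim k g (i - 1) = Ysim k g' (i - 1) :=
        Ysim_congr (fun c h1 h2 =>
          hgg' c (Finset.mem_product.2 ⟨Finset.mem_Icc.2 ⟨h1, h2⟩, Finset.mem_univ _⟩))
      simp only [hF3, hc]
    have hdep4 : DepOn S4 F4 := by
      intro g g' hgg'
      simp only [hF4]
      apply Hits_congr
      intro t ht
      have hagree : ∀ j' : Fin (k + 1), g (i + 1 + t, j') = g' (i + 1 + t, j') := fun j' =>
        hgg' _ (Finset.mem_product.2
          ⟨Finset.mem_Icc.2 ⟨by omega, by omega⟩, Finset.mem_univ _⟩)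
      simp only [hagree]
    have hdepG1 : DepOn T1 (fun g => F1 g ∧ (F2 g ∧ F4 g)) := by
      intro g g' hgg'
      have e1 : F1 g ↔ F1 g' := by
        simp only [hF1, hgg' (i, j₀) (Finset.mem_product.2
          ⟨Finset.mem_Icc.2 ⟨le_refl i, by omega⟩, Finset.mem_univ _⟩)]
      have e2 : F2 g ↔ F2 g' := by
        have hagree : ∀ j' ∈ Finset.univ.erase j₀, g (i, j') = g' (i, j') := fun j' hj' =>
          hgg' (i, j') (Finset.mem_product.2
            ⟨Finset.mem_Icc.2 ⟨le_refl i, by omega⟩, Finset.mem_univ _⟩)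
        simp only [hF2, Finset.sum_congr rfl hagree]
      have e4 : F4 g ↔ F4 g' := by
        simp only [hF4]
        apply Hits_congr
        intro t ht
        have hagree : ∀ j' : Fin (k + 1), g (i + 1 + t, j') = g' (i + 1 + t, j') := fun j' =>
          hgg' _ (Finset.mem_product.2
            ⟨Finset.mem_Icc.2 ⟨by omega, by omega⟩, Finset.mem_univ _⟩)
        simp only [hagree]
      exact and_congr e1 (and_congr e2 e4)
    have hdepG2 : DepOn (S2 ∪ S4) (fun g => F2 g ∧ F4 g) := by
      intro g g' hgg'
      have e2 : F2 g ↔ F2 g' := by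
        have hagree : ∀ j' ∈ Finset.univ.erase j₀, g (i, j') = g' (i, j') := fun j' hj' =>
          hgg' (i, j') (Finset.mem_union_left _
            (Finset.mem_product.2 ⟨Finset.mem_singleton_self i, hj'⟩))
        simp only [hF2, Finset.sum_congr rfl hagree]
      have e4 : F4 g ↔ F4 g' := by
        simp only [hF4]
        apply Hits_congr
        intro t ht
        have hagree : ∀ j' : Fin (k + 1), g (i + 1 + t, j') = g' (i + 1 + t, j') := fun j' =>
          hgg' _ (Finset.mem_union_right _ (Finset.mem_product.2
            ⟨Finset.mem_Icc.2 ⟨by omega, by omega⟩, Finset.mem_univ _⟩))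
        simp only [hagree]
      exact and_congr e2 e4
    -- disjointness
    have hd3T1 : Disjoint S3 T1 := by
      rw [Finset.disjoint_left]
      rintro ⟨m, j'⟩ h1 h2
      simp only [hS3, hT1, Finset.mem_product, Finset.mem_Icc, Finset.mem_univ,
        and_true] at h1 h2
      omega
    have hd1T2 : Disjoint ({(i, j₀)} : Finset (ℕ × Fin (k + 1))) (S2 ∪ S4) := by
      rw [Finset.disjoint_left]
      rintro c h1 h2
      rw [Finset.mem_singleton] at h1
      subst h1
      rw [Finset.mem_union] at h2
      rcases h2 with h2 | h2
      · simp only [hS2, Finset.mem_product, Finset.mem_singleton] at h2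
        exact Finset.notMem_erase j₀ _ h2.2
      · simp only [hS4, Finset.mem_product, Finset.mem_Icc, Finset.mem_univ,
          and_true] at h2
        omega
    have hd24 : Disjoint S2 S4 := by
      rw [Finset.disjoint_left]
      rintro ⟨m, j'⟩ h1 h2
      simp only [hS2, hS4, Finset.mem_product, Finset.mem_singleton, Finset.mem_Icc,
        Finset.mem_univ, and_true] at h1 h2
      omega
    -- event identifications
    have hZeq : {ω | Y (i - 1) ω = (y : ℤ)} = {ω | F3 (fun c => B c ω)} := by
      ext ω
      simp only [Set.mem_setOf_eq, hF3, hYsimEq ω (i - 1)]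
    have hWeq : Wst (y + u) = {ω | F4 (fun c => B c ω)} := by
      ext ω
      simp only [hWst, Set.mem_setOf_eq, hF4]
      exact Hits_congr (fun t ht => hX (i + 1 + t) ω)
    have hVeq : V y u = {ω | F3 (fun c => B c ω)}
        ∩ {ω | (fun g => F1 g ∧ (F2 g ∧ F4 g)) (fun c => B c ω)} := by
      have h4iff : ∀ ω, ω ∈ Wst (y + u) ↔ F4 (fun c => B c ω) := fun ω =>
        (Set.ext_iff.1 hWeq ω)
      ext ω
      simp only [hV, hAdef, Set.mem_inter_iff, Set.mem_setOf_eq]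
      constructor
      · rintro ⟨h1, h2, h3, h4⟩
        refine ⟨?_, h1, h3, (h4iff ω).1 h4⟩
        simp only [hF3]
        rw [← hYsimEq ω (i - 1)]
        exact h2
      · rintro ⟨h2, h1, h3, h4⟩
        refine ⟨h1, ?_, h3, (h4iff ω).2 h4⟩
        simp only [hF3] at h2
        rw [hYsimEq ω (i - 1)]
        exact h2
    have hGset1 : {ω | (fun g => F1 g ∧ (F2 g ∧ F4 g)) (fun c => B c ω)}
        = {ω | F1 (fun c => B c ω)}
          ∩ {ω | (fun g => F2 g ∧ F4 g) (fun c => B c ω)} := by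
      ext ω; simp only [Set.mem_inter_iff, Set.mem_setOf_eq]
    have hGset2 : {ω | (fun g => F2 g ∧ F4 g) (fun c => B c ω)}
        = {ω | F2 (fun c => B c ω)} ∩ {ω | F4 (fun c => B c ω)} := by
      ext ω; simp only [Set.mem_inter_iff, Set.mem_setOf_eq]
    -- splits
    have step1 : μ (V y u) = μ {ω | F3 (fun c => B c ω)}
        * μ {ω | (fun g => F1 g ∧ (F2 g ∧ F4 g)) (fun c => B c ω)} := by
      rw [hVeq]
      exact splitB' hmeasB hindepB hd3T1 hdep3 hdepG1
    have step2 : μ {ω | (fun g => F1 g ∧ (F2 g ∧ F4 g)) (fun c => B c ω)}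
        = μ {ω | F1 (fun c => B c ω)}
          * μ {ω | (fun g => F2 g ∧ F4 g) (fun c => B c ω)} := by
      rw [hGset1]
      exact splitB' hmeasB hindepB hd1T2 hdep1 hdepG2
    have step3 : μ {ω | (fun g => F2 g ∧ F4 g) (fun c => B c ω)}
        = μ {ω | F2 (fun c => B c ω)} * μ {ω | F4 (fun c => B c ω)} := by
      rw [hGset2]
      exact splitB' hmeasB hindepB hd24 hdep2 hdep4
    -- values
    have hval1 : μ {ω | F1 (fun c => B c ω)} = ENNReal.ofReal p := hBern1 (i, j₀)
    have hval2 : μ {ω | F2 (fun c => B c ω)}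
        = ENNReal.ofReal ((k.choose u : ℝ) * p ^ u * (1 - p) ^ (k - u)) := by
      have hconv : {ω | F2 (fun c => B c ω)}
          = {ω | ∑ c ∈ ({i} ×ˢ Finset.univ.erase j₀), B c ω = u} := by
        ext ω
        simp only [Set.mem_setOf_eq, hF2, Finset.sum_product, Finset.sum_singleton]
      have hcard : ({i} ×ˢ Finset.univ.erase j₀).card = k := by
        rw [Finset.card_product, Finset.card_singleton, one_mul,
          Finset.card_erase_of_mem (Finset.mem_univ _), Finset.card_univ,
          Fintype.card_fin]
        omega
      rw [hconv, binomB hp0 hp1 hmeasB hindepB hBern1 hBern0, hcard]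
    have hval4 : μ {ω | F4 (fun c => B c ω)} = μ₂ {ω | H (y + u) ω = (h : ℕ∞)} := by
      rw [← hWeq, hWst]
      rw [hitEq hp0 hp1 hmeasB hindepB hBern1 hBern0 hX hmeasX₂ hindepX₂ hdistX₂
        i (((y + u : ℕ)) : ℤ) h]
      rw [hHev (y + u)]
    rw [step1, step2, step3, hval1, hval2, hval4, ← hZeq]
    ring
  -- final assembly
  rw [ProbabilityTheory.cond_apply hmA, hDev, hpieces, measure_iUnion hdisjV hmV]
  have hfactall : ∀ yu : ℕ × ℕ, μ (V yu.1 yu.2)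
      = ENNReal.ofReal p *
        (ENNReal.ofReal ((k.choose yu.2 : ℝ) * p ^ yu.2 * (1 - p) ^ (k - yu.2)) *
          μ₂ {ω | H (yu.1 + yu.2) ω = (h : ℕ∞)} * μ {ω | Y (i - 1) ω = (yu.1 : ℤ)}) :=
    fun yu => hfact yu.1 yu.2
  have hAval : μ A = ENNReal.ofReal p := hBern1 (i, j₀)
  have hprod : (∑' yu : ℕ × ℕ, μ (V yu.1 yu.2)) = ∑' (y : ℕ), ∑' (u : ℕ), μ (V y u) :=
    ENNReal.tsum_prod (f := fun y u => μ (V y u))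
  rw [hprod]
  have hinner : ∀ y : ℕ, (∑' u : ℕ, μ (V y u))
      = ENNReal.ofReal p * ∑ u ∈ Finset.range (k + 1),
          (ENNReal.ofReal ((k.choose u : ℝ) * p ^ u * (1 - p) ^ (k - u)) *
            μ₂ {ω | H (y + u) ω = (h : ℕ∞)} * μ {ω | Y (i - 1) ω = (y : ℤ)}) := by
    intro y
    have hvanish : ∀ u ∉ Finset.range (k + 1),
        ENNReal.ofReal p *
          (ENNReal.ofReal ((k.choose u : ℝ) * p ^ u * (1 - p) ^ (k - u)) *
            μ₂ {ω | H (y + u) ω = (h : ℕ∞)} * μ {ω | Y (i - 1) ω = (y : ℤ)}) = 0 := by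
      intro u hu
      rw [Finset.mem_range, not_lt] at hu
      rw [Nat.choose_eq_zero_of_lt (by omega : k < u)]
      simp
    rw [tsum_congr (fun u => hfact y u), tsum_eq_sum hvanish, ← Finset.mul_sum]
  rw [tsum_congr hinner, ENNReal.tsum_mul_left, hAval, ← mul_assoc,
    ENNReal.inv_mul_cancel (ENNReal.ofReal_pos.2 hp0).ne' ENNReal.ofReal_ne_top,
    one_mul]
end

section
/- (Block increment given the position of the first loss.) Let k ≥ 1 be an integer and p ∈ (0,1). Let (B_{i,j})_{i≥1, 0≤j≤k} be an i.i.d. array of Bernoulli(p) random variables, X_i = (∑_{j=0}^{k} B_{i,j}) − 1, and Y_0 = 0, Y_n = max(Y_{n−1} + X_n, 0). Fix i ≥ 1 with P(Y_{i−1} = 0) > 0, and let F_i = min{ j ∈ {0, …, k−1} : B_{i,j} = 1 } (defined on the event that block i contains at least one lost source packet). Then for every j ∈ {0, …, k−1} and every u ∈ {0, …, k−j}: P(Y_i = u | Y_{i−1} = 0, F_i = j) = C(k−j, u) p^u (1−p)^{k−j−u}. -/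
open MeasureTheory ProbabilityTheory
open scoped ENNReal

noncomputable def stmt11.gaux (k : ℕ) : ℕ → (ℕ × Fin (k+1) → ℕ) → ℤ
  | 0, _ => 0
  | n+1, f => max (stmt11.gaux k n f + ((∑ l : Fin (k+1), (f (n+1, l) : ℤ)) - 1)) 0

lemma stmt11.gaux_congr (k n : ℕ) (f f' : ℕ × Fin (k+1) → ℕ)
    (h : ∀ m l, m ≤ n → f (m, l) = f' (m, l)) : stmt11.gaux k n f = stmt11.gaux k n f' := by
  induction n with
  | zero => rfl
  | succ n ih =>
      simp only [stmt11.gaux]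
      rw [ih (fun m l hm => h m l (hm.trans (Nat.le_succ n)))]
      have : (∑ l : Fin (k+1), (f (n+1, l) : ℤ)) = ∑ l : Fin (k+1), (f' (n+1, l) : ℤ) :=
        Finset.sum_congr rfl fun l _ => by rw [h (n+1) l le_rfl]
      rw [this]

lemma stmt11.measurable_gaux (k n : ℕ) : Measurable (stmt11.gaux k n) := by
  induction n with
  | zero => exact measurable_const
  | succ n ih =>
      simp only [stmt11.gaux]
      apply Measurable.max _ measurable_const
      apply ih.add
      apply Measurable.sub _ measurable_const
      exact Finset.measurable_sum _ fun l _ =>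
        Measurable.comp (measurable_from_top) (measurable_pi_apply _)

set_option maxHeartbeats 2000000 in
/-- Block increment given the position of the first loss: if the chain is in state 0 at the end
of block `i-1` and the first lost source packet of block `i` is at position `j`, then
`P(Y_i = u | Y_{i-1} = 0, F_i = j) = C(k-j, u) pᵘ (1-p)^{k-j-u}`. -/
theorem stmt_11 {Ω : Type*} [MeasurableSpace Ω] (μ : Measure Ω) [IsProbabilityMeasure μ]
    (k : ℕ) (hk : 1 ≤ k) (p : ℝ) (hp0 : 0 < p) (hp1 : p < 1)
    (B : ℕ × Fin (k + 1) → Ω → ℕ)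
    (hmeas : ∀ idx, Measurable (B idx))
    (hindep : iIndepFun B μ)
    (hBern1 : ∀ idx, μ {ω | B idx ω = 1} = ENNReal.ofReal p)
    (hBern0 : ∀ idx, μ {ω | B idx ω = 0} = ENNReal.ofReal (1 - p))
    (X : ℕ → Ω → ℤ)
    (hX : ∀ i ω, X i ω = (∑ j : Fin (k + 1), (B (i, j) ω : ℤ)) - 1)
    (Y : ℕ → Ω → ℤ)
    (hY0 : ∀ ω, Y 0 ω = 0)
    (hYs : ∀ n ω, Y (n + 1) ω = max (Y n ω + X (n + 1) ω) 0)
    (i : ℕ) (hi : 1 ≤ i)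
    (hipos : 0 < μ {ω | Y (i - 1) ω = 0})
    (Fi : Ω → ℕ)
    (hFi : ∀ ω, Fi ω = sInf {j : ℕ | ∃ hjk : j < k, B (i, ⟨j, Nat.lt_succ_of_lt hjk⟩) ω = 1}) :
    ∀ j : ℕ, j < k → ∀ u : ℕ, u ≤ k - j →
      μ[|{ω | Y (i - 1) ω = 0 ∧
            (∃ j' : ℕ, ∃ hj'k : j' < k, B (i, ⟨j', Nat.lt_succ_of_lt hj'k⟩) ω = 1) ∧
            Fi ω = j}]
          {ω | Y i ω = (u : ℤ)} =
        ENNReal.ofReal (((k - j).choose u : ℝ) * p ^ u * (1 - p) ^ (k - j - u)) := by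
  intro j hjk u huk
  -- abbreviations
  set P : ℝ≥0∞ := ENNReal.ofReal p with hP
  set Q : ℝ≥0∞ := ENNReal.ofReal (1 - p) with hQ
  have hq0 : (0:ℝ) < 1 - p := by linarith
  have hPne0 : P ≠ 0 := by simp [hP, ENNReal.ofReal_eq_zero]; linarith
  have hQne0 : Q ≠ 0 := by simp [hQ, ENNReal.ofReal_eq_zero]; linarith
  have hPnetop : P ≠ ⊤ := ENNReal.ofReal_ne_top
  have hQnetop : Q ≠ ⊤ := ENNReal.ofReal_ne_top
  set jfin : Fin (k+1) := ⟨j, Nat.lt_succ_of_lt hjk⟩ with hjfin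
  have hjv : (jfin : ℕ) = j := by rw [hjfin]
  -- measurability of X and Y
  have hmX : ∀ n, Measurable (X n) := by
    intro n
    have : X n = fun ω => (∑ l : Fin (k+1), (B (n, l) ω : ℤ)) - 1 := funext (hX n)
    rw [this]
    exact (Finset.measurable_sum _ fun l _ =>
      Measurable.comp measurable_from_top (hmeas (n, l))).sub measurable_const
  have hmY : ∀ n, Measurable (Y n) := by
    intro n
    induction n with
    | zero =>
        have : Y 0 = fun _ => (0:ℤ) := funext hY0
        rw [this]; exact measurable_const
    | succ n ih =>
        have : Y (n+1) = fun ω => max (Y n ω + X (n+1) ω) 0 := funext (hYs n)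
        rw [this]
        exact (ih.add (hmX (n+1))).max measurable_const
  -- Y as a function of B
  have hYeq : ∀ n ω, Y n ω = stmt11.gaux k n (fun idx => B idx ω) := by
    intro n
    induction n with
    | zero => intro ω; rw [hY0 ω]; rfl
    | succ n ih =>
        intro ω
        rw [hYs n ω, hX (n+1) ω, ih ω]
        rfl
  -- the independence machinery
  set A : Set Ω := {ω | Y (i-1) ω = 0} with hA
  set Sset : Finset (ℕ × Fin (k+1)) := Finset.range i ×ˢ Finset.univ with hSset
  set Tset : Finset (ℕ × Fin (k+1)) := {i} ×ˢ Finset.univ with hTset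
  have hST : Disjoint Sset Tset := by
    rw [Finset.disjoint_left]
    rintro ⟨n, l⟩ hnS hnT
    rw [hSset, Finset.mem_product] at hnS
    rw [hTset, Finset.mem_product] at hnT
    simp at hnS hnT
    omega
  set φS : Ω → (↥Sset → ℕ) := fun ω t => B t.1 ω with hφS
  set φT : Ω → (↥Tset → ℕ) := fun ω t => B t.1 ω with hφT
  have hIndep2 : IndepFun φS φT μ := hindep.indepFun_finset Sset Tset hST hmeas
  -- A is a preimage under φS
  set h0 : (↥Sset → ℕ) → ℤ :=
    fun f => stmt11.gaux k (i-1) (fun idx => if hx : idx ∈ Sset then f ⟨idx, hx⟩ else 0) with hh0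
  have hmh0 : Measurable h0 := by
    apply (stmt11.measurable_gaux k (i-1)).comp
    apply measurable_pi_lambda
    intro idx
    by_cases hx : idx ∈ Sset
    · simp only [hx, dif_pos]; exact measurable_pi_apply _
    · simp only [hx, dif_neg, not_false_iff]; exact measurable_const
  have hAeq : A = φS ⁻¹' (h0 ⁻¹' {0}) := by
    ext ω
    simp only [hA, Set.mem_setOf_eq, Set.mem_preimage, Set.mem_singleton_iff, hh0, hφS]
    have : stmt11.gaux k (i-1)
        (fun idx => if hx : idx ∈ Sset then B idx ω else 0)
        = stmt11.gaux k (i-1) (fun idx => B idx ω) := by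
      apply stmt11.gaux_congr
      intro m l hm
      have : (m, l) ∈ Sset := by
        rw [hSset, Finset.mem_product]
        exact ⟨Finset.mem_range.2 (by omega), Finset.mem_univ _⟩
      simp [this]
    rw [this, ← hYeq (i-1) ω]
  have hAm : MeasurableSet A := (hmY (i-1)) (measurableSet_singleton 0)
  -- key product formula
  have hkey : ∀ (R : Finset (Fin (k+1))) (c : Fin (k+1) → ℕ),
      μ (A ∩ {ω | ∀ l ∈ R, B (i, l) ω = c l})
        = μ A * ∏ l ∈ R, μ {ω | B (i, l) ω = c l} := by
    intro R c
    set MT : Set (↥Tset → ℕ) := {f | ∀ t : ↥Tset, t.1.2 ∈ R → f t = c t.1.2} with hMT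
    have hMTm : MeasurableSet MT := by
      have : MT = ⋂ t : ↥Tset, {f : ↥Tset → ℕ | t.1.2 ∈ R → f t = c t.1.2} := by
        ext f; simp [hMT]
      rw [this]
      apply MeasurableSet.iInter
      intro t
      by_cases ht : t.1.2 ∈ R
      · simp only [ht, true_implies]
        exact (measurable_pi_apply t) (measurableSet_singleton _)
      · simp [ht]
    have hDR : {ω | ∀ l ∈ R, B (i, l) ω = c l} = φT ⁻¹' MT := by
      ext ω
      simp only [Set.mem_setOf_eq, Set.mem_preimage, hMT, hφT]
      constructor
      · rintro h ⟨⟨n, l⟩, htt⟩ ht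
        rw [hTset, Finset.mem_product, Finset.mem_singleton] at htt
        obtain ⟨rfl, -⟩ := htt
        exact h l ht
      · intro h l hl
        exact h ⟨(i, l), by rw [hTset, Finset.mem_product]; simp⟩ hl
    rw [hDR, hAeq]
    rw [hIndep2.measure_inter_preimage_eq_mul _ _ (hmh0 (measurableSet_singleton 0)) hMTm]
    rw [← hAeq, ← hDR]
    congr 1
    -- now μ of the block-i event is the product
    have hInter : (⋂ idx ∈ ({i} ×ˢ R : Finset (ℕ × Fin (k+1))), B idx ⁻¹' {c idx.2})
        = {ω | ∀ l ∈ R, B (i, l) ω = c l} := by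
      ext ω
      simp only [Set.mem_iInter, Set.mem_preimage, Set.mem_singleton_iff,
        Finset.mem_product, Finset.mem_singleton, Set.mem_setOf_eq]
      constructor
      · intro h l hl; exact h (i, l) ⟨rfl, hl⟩
      · rintro h ⟨n, l⟩ ⟨rfl, hl⟩; exact h l hl
    have := hindep.measure_inter_preimage_eq_mul ({i} ×ˢ R)
      (sets := fun idx => {c idx.2}) (fun idx _ => measurableSet_singleton _)
    rw [hInter] at this
    rw [this, Finset.prod_product]
    simp only [Finset.prod_singleton]
    rfl
  -- finsets of positions
  set S' : Finset (Fin (k+1)) := Finset.univ.filter (fun l => j < l.val) with hS'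
  have hjfinS' : jfin ∉ S' := by simp [hS', hjfin]
  have hS'card : S'.card = k - j := by
    have : S' = Finset.Ioi jfin := by
      ext l; simp [hS', Finset.mem_Ioi, Fin.lt_def, hjfin]
    rw [this, Fin.card_Ioi]; simp [hjfin]
  have hRltcard : (Finset.univ.filter (fun l : Fin (k+1) => l.val < j)).card = j := by
    have : (Finset.univ.filter (fun l : Fin (k+1) => l.val < j)) = Finset.Iio jfin := by
      ext l; simp [Finset.mem_Iio, Fin.lt_def, hjfin]
    rw [this, Fin.card_Iio]
  set R0 : Finset (Fin (k+1)) := Finset.univ.filter (fun l => l.val ≤ j) with hR0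
  set c0 : Fin (k+1) → ℕ := fun l => if l.val = j then 1 else 0 with hc0
  set E0 : Set Ω := {ω | ∀ l ∈ R0, B (i, l) ω = c0 l} with hE0
  set cT : Finset (Fin (k+1)) → Fin (k+1) → ℕ :=
    fun T l => if l = jfin ∨ l ∈ T then 1 else 0 with hcT
  set Dspec : Finset (Fin (k+1)) → Set Ω :=
    fun T => {ω | ∀ l ∈ (Finset.univ : Finset (Fin (k+1))), B (i, l) ω = cT T l} with hDspec
  set E1 : Set Ω :=
    {ω | B (i, jfin) ω = 1 ∧ ∀ l : Fin (k+1), l.val < j → B (i, l) ω ≠ 1} with hE1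
  -- the conditioning event is A ∩ E1
  have hCeq : {ω | Y (i - 1) ω = 0 ∧
      (∃ j' : ℕ, ∃ hj'k : j' < k, B (i, ⟨j', Nat.lt_succ_of_lt hj'k⟩) ω = 1) ∧
      Fi ω = j} = A ∩ E1 := by
    ext ω
    simp only [Set.mem_setOf_eq, Set.mem_inter_iff, hA, hE1]
    constructor
    · rintro ⟨hY, ⟨j', hj'k, hBj'⟩, hFij⟩
      refine ⟨hY, ?_, ?_⟩
      · have hne : {m : ℕ | ∃ hmk : m < k, B (i, ⟨m, Nat.lt_succ_of_lt hmk⟩) ω = 1}.Nonempty :=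
          ⟨j', hj'k, hBj'⟩
        have hmem := Nat.sInf_mem hne
        rw [hFi ω] at hFij
        rw [hFij] at hmem
        obtain ⟨hjk', hBj⟩ := hmem
        exact hBj
      · intro l hl hB1
        rw [hFi ω] at hFij
        have hlmem : l.val ∈ {m : ℕ | ∃ hmk : m < k, B (i, ⟨m, Nat.lt_succ_of_lt hmk⟩) ω = 1} := by
          refine ⟨by omega, ?_⟩
          have : (⟨l.val, Nat.lt_succ_of_lt (by omega : l.val < k)⟩ : Fin (k+1)) = l :=
            Fin.ext rfl
          rw [this]; exact hB1
        have := Nat.sInf_le hlmem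
        omega
    · rintro ⟨hY, hBj, hmin⟩
      refine ⟨hY, ⟨j, hjk, hBj⟩, ?_⟩
      rw [hFi ω]
      have hne : {m : ℕ | ∃ hmk : m < k, B (i, ⟨m, Nat.lt_succ_of_lt hmk⟩) ω = 1}.Nonempty :=
        ⟨j, hjk, hBj⟩
      have hmem := Nat.sInf_mem hne
      apply le_antisymm
      · exact Nat.sInf_le ⟨hjk, hBj⟩
      · by_contra hcon
        push_neg at hcon
        obtain ⟨hsk, hBs⟩ := hmem
        exact hmin ⟨_, Nat.lt_succ_of_lt hsk⟩ hcon hBs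
  -- a.e. all B values are ≤ 1
  set G : Set Ω := {ω | ∀ idx, B idx ω ≤ 1} with hG
  have hGae : ∀ᵐ ω ∂μ, ω ∈ G := by
    rw [hG]
    have : ∀ᵐ ω ∂μ, ∀ idx : ℕ × Fin (k+1), B idx ω ≤ 1 := by
      rw [MeasureTheory.ae_all_iff]
      intro idx
      have hunion : μ ({ω | B idx ω = 0} ∪ {ω | B idx ω = 1}) = 1 := by
        rw [measure_union _ (show MeasurableSet {ω | B idx ω = 1} from
          (hmeas idx) (measurableSet_singleton 1))]
        · rw [hBern0 idx, hBern1 idx, hQ, hP, ← ENNReal.ofReal_add (by linarith) (by linarith)]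
          norm_num
        · rw [Set.disjoint_left]
          intro ω h0' h1'
          simp only [Set.mem_setOf_eq] at h0' h1'
          omega
      have hcompl : μ ({ω | B idx ω = 0} ∪ {ω | B idx ω = 1})ᶜ = 0 := by
        rw [measure_compl ((show MeasurableSet {ω | B idx ω = 0} from
          (hmeas idx) (measurableSet_singleton 0)).union
          (show MeasurableSet {ω | B idx ω = 1} from
          (hmeas idx) (measurableSet_singleton 1))) (measure_ne_top μ _), hunion]
        simp
      refine measure_mono_null ?_ hcompl
      intro ω hω
      simp only [Set.mem_compl_iff, Set.mem_union, Set.mem_setOf_eq] at hω ⊢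
      omega
    exact this
  have hmeq : ∀ Pk Qk : Set Ω, Pk ∩ G = Qk ∩ G → μ Pk = μ Qk := by
    intro Pk Qk hPQ
    apply measure_congr
    rw [Filter.eventuallyEq_set]
    filter_upwards [hGae] with ω hω
    rw [Set.ext_iff] at hPQ
    have := hPQ ω
    simp only [Set.mem_inter_iff] at this
    constructor
    · intro h; exact ((this.1 ⟨h, hω⟩).1)
    · intro h; exact ((this.2 ⟨h, hω⟩).1)
  -- measurability of E1
  have hE1m : MeasurableSet E1 := by
    rw [hE1]
    have h2 : MeasurableSet {ω | ∀ l : Fin (k+1), l.val < j → B (i, l) ω ≠ 1} := by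
      have : {ω | ∀ l : Fin (k+1), l.val < j → B (i, l) ω ≠ 1}
          = ⋂ l : Fin (k+1), {ω | l.val < j → B (i, l) ω ≠ 1} := by
        ext ω; simp
      rw [this]
      apply MeasurableSet.iInter
      intro l
      by_cases hl : l.val < j
      · simp only [hl, true_implies]
        have : {ω | B (i, l) ω ≠ 1} = {ω | B (i, l) ω = 1}ᶜ := rfl
        rw [this]
        exact (show MeasurableSet {ω | B (i, l) ω = 1} from
          (hmeas _) (measurableSet_singleton 1)).compl
      · simp [hl]
    rw [Set.setOf_and]
    exact ((show MeasurableSet {ω | B (i, jfin) ω = 1} from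
      (hmeas _) (measurableSet_singleton 1))).inter h2
  have hCm : MeasurableSet (A ∩ E1) := hAm.inter hE1m
  -- denominator event identification
  have hden_ev : (A ∩ E1) ∩ G = (A ∩ E0) ∩ G := by
    ext ω
    simp only [Set.mem_inter_iff, hE1, hE0, hG, hR0, hc0, Set.mem_setOf_eq, Finset.mem_filter,
      Finset.mem_univ, true_and]
    constructor
    · rintro ⟨⟨hAω, hBj, hmin⟩, hGω⟩
      refine ⟨⟨hAω, ?_⟩, hGω⟩
      intro l hl
      by_cases hlj : l.val = j
      · have hlfin : l = jfin := by rw [hjfin]; exact Fin.ext hlj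
        rw [if_pos hlj, hlfin]
        exact hBj
      · have hlt : l.val < j := by omega
        have h1 := hmin l hlt
        have h2 := hGω (i, l)
        rw [if_neg hlj]
        omega
    · rintro ⟨⟨hAω, hE0ω⟩, hGω⟩
      refine ⟨⟨hAω, ?_, ?_⟩, hGω⟩
      · have := hE0ω jfin (by rw [hjfin])
        rw [if_pos (by rw [hjfin])] at this
        exact this
      · intro l hl
        have := hE0ω l (by omega)
        rw [if_neg (by omega)] at this
        omega
  -- denominator value
  have hdenom : μ (A ∩ E1) = μ A * (P * Q ^ j) := by
    rw [hmeq _ _ hden_ev, hE0, hkey R0 c0]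
    congr 1
    have hjmem : jfin ∈ R0 := by simp [hR0, hjfin]
    rw [← Finset.mul_prod_erase R0 _ hjmem]
    congr 1
    · have : c0 jfin = 1 := by rw [hc0]; simp [hjfin]
      rw [this]
      exact hBern1 _
    · have herase : R0.erase jfin = Finset.univ.filter (fun l : Fin (k+1) => l.val < j) := by
        ext l
        simp only [Finset.mem_erase, hR0, Finset.mem_filter, Finset.mem_univ, true_and]
        rw [Ne, Fin.ext_iff, hjv]
        constructor
        · rintro ⟨h1, h2⟩; omega
        · intro h1; constructor <;> omega
      rw [herase]
      have hq : ∀ l ∈ Finset.univ.filter (fun l : Fin (k+1) => l.val < j),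
          μ {ω | B (i, l) ω = c0 l} = Q := by
        intro l hl
        simp only [Finset.mem_filter, Finset.mem_univ, true_and] at hl
        have : c0 l = 0 := by rw [hc0]; simp only [ite_eq_right_iff]; omega
        rw [this]
        exact hBern0 _
      rw [Finset.prod_congr rfl hq, Finset.prod_const, hRltcard]
  -- recurrence at block i
  have hYi : ∀ ω, Y i ω = max (Y (i-1) ω + X i ω) 0 := by
    intro ω
    have h := hYs (i-1) ω
    rwa [Nat.sub_add_cancel hi] at h
  -- sum of a full specification
  have hfiltercard : ∀ T : Finset (Fin (k+1)), T ⊆ S' →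
      (Finset.univ.filter (fun l => l = jfin ∨ l ∈ T)) = insert jfin T := by
    intro T hT
    ext l
    simp [Finset.mem_insert]
  have hjfinT : ∀ T : Finset (Fin (k+1)), T ⊆ S' → jfin ∉ T :=
    fun T hT h => hjfinS' (hT h)
  have hsumcT : ∀ T : Finset (Fin (k+1)), T ⊆ S' →
      (∑ l : Fin (k+1), ((cT T l : ℤ))) = 1 + T.card := by
    intro T hT
    have : ∀ l : Fin (k+1), ((cT T l : ℤ)) = if l = jfin ∨ l ∈ T then (1:ℤ) else 0 := by
      intro l
      simp only [hcT]
      by_cases h : l = jfin ∨ l ∈ T <;> simp [h]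
    rw [Finset.sum_congr rfl (fun l _ => this l), Finset.sum_boole, hfiltercard T hT,
      Finset.card_insert_of_notMem (hjfinT T hT)]
    push_cast
    ring
  -- numerator event identification
  have hnum_ev : ((A ∩ E1) ∩ {ω | Y i ω = (u:ℤ)}) ∩ G
      = (⋃ T ∈ Finset.powersetCard u S', A ∩ Dspec T) ∩ G := by
    ext ω
    simp only [Set.mem_inter_iff, Set.mem_iUnion, Set.mem_setOf_eq, hE1, hG, hA, hDspec,
      Finset.mem_univ, forall_true_left, exists_prop]
    constructor
    · rintro ⟨⟨⟨hAω, hBj, hmin⟩, hYu⟩, hGω⟩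
      refine ⟨?_, hGω⟩
      set T := S'.filter (fun l => B (i, l) ω = 1) with hT
      have hTsub : T ⊆ S' := Finset.filter_subset _ _
      have hspec : ∀ l : Fin (k+1), B (i, l) ω = cT T l := by
        intro l
        simp only [hcT]
        by_cases h1 : l = jfin
        · rw [if_pos (Or.inl h1), h1]; exact hBj
        · by_cases h2 : l ∈ T
          · rw [if_pos (Or.inr h2)]
            exact (Finset.mem_filter.1 h2).2
          · rw [if_neg (by tauto)]
            have hle := hGω (i, l)
            by_cases h3 : j < l.val
            · have hlS' : l ∈ S' := by rw [hS']; simp [h3]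
              have hne : B (i, l) ω ≠ 1 := by
                intro hB
                exact h2 (by rw [hT]; exact Finset.mem_filter.2 ⟨hlS', hB⟩)
              omega
            · have h4 : l.val < j := by
                have : l.val ≠ j := by
                  intro h; exact h1 (by rw [hjfin]; exact Fin.ext h)
                omega
              have := hmin l h4
              omega
      have hsum : (∑ l : Fin (k+1), (B (i, l) ω : ℤ)) = 1 + T.card := by
        rw [Finset.sum_congr rfl (fun l _ => by rw [hspec l]), hsumcT T hTsub]
      have hTcard : T.card = u := by
        have hYiω := hYi ω
        rw [hAω, hX i ω, hsum, hYu] at hYiω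
        omega
      exact ⟨T, Finset.mem_powersetCard.2 ⟨hTsub, hTcard⟩, hAω, fun l => hspec l⟩
    · rintro ⟨⟨T, hTmem, hAω, hDω⟩, hGω⟩
      obtain ⟨hTsub, hTcard⟩ := Finset.mem_powersetCard.1 hTmem
      have hspec : ∀ l : Fin (k+1), B (i, l) ω = cT T l := hDω
      refine ⟨⟨⟨hAω, ?_, ?_⟩, ?_⟩, hGω⟩
      · have := hspec jfin
        simp [hcT] at this
        exact this
      · intro l hl hB1
        have hlj : l ≠ jfin := by
          intro h
          rw [h, hjv] at hl
          omega
        have hlT : l ∉ T := by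
          intro h
          have := hTsub h
          rw [hS'] at this
          simp at this
          omega
        have := hspec l
        simp only [hcT] at this
        rw [if_neg (by tauto)] at this
        omega
      · have hsum : (∑ l : Fin (k+1), (B (i, l) ω : ℤ)) = 1 + T.card := by
          rw [Finset.sum_congr rfl (fun l _ => by rw [hspec l]), hsumcT T hTsub]
        rw [hYi ω, hAω, hX i ω, hsum, hTcard]
        omega
  -- measurability and disjointness of the pieces
  have hDspecm : ∀ T : Finset (Fin (k+1)), MeasurableSet (A ∩ Dspec T) := by
    intro T
    apply hAm.inter
    simp only [hDspec]
    have : {ω | ∀ l ∈ (Finset.univ : Finset (Fin (k+1))), B (i, l) ω = cT T l}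
        = ⋂ l : Fin (k+1), {ω | B (i, l) ω = cT T l} := by
      ext ω; simp
    rw [this]
    exact MeasurableSet.iInter fun l =>
      (show MeasurableSet {ω | B (i, l) ω = cT T l} from
        (hmeas _) (measurableSet_singleton _))
  have hdisj : Set.PairwiseDisjoint ↑(Finset.powersetCard u S')
      (fun T => A ∩ Dspec T) := by
    intro T hT T' hT' hne
    have hTs := (Finset.mem_powersetCard.1 (Finset.mem_coe.1 hT)).1
    have hT's := (Finset.mem_powersetCard.1 (Finset.mem_coe.1 hT')).1
    rw [Function.onFun, Set.disjoint_left]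
    rintro ω ⟨-, h1⟩ ⟨-, h2⟩
    simp only [hDspec, Set.mem_setOf_eq, Finset.mem_univ, forall_true_left] at h1 h2
    have : ∃ l, (l ∈ T) ≠ (l ∈ T') := by
      by_contra hcon
      push_neg at hcon
      exact hne (Finset.ext fun l => by rw [hcon l])
    obtain ⟨l, hl⟩ := this
    have hne1 : l ∈ T ∨ l ∈ T' := by
      by_cases a : l ∈ T
      · exact Or.inl a
      · by_cases b : l ∈ T'
        · exact Or.inr b
        · simp [a, b] at hl
    have hlS' : l ∈ S' := by
      rcases hne1 with h | h
      · exact hTs h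
      · exact hT's h
    have hlj : l ≠ jfin := fun e => hjfinS' (e ▸ hlS')
    have hv1 := h1 l
    have hv2 := h2 l
    simp only [hcT] at hv1 hv2
    by_cases hT1 : l ∈ T
    · have hT2 : l ∉ T' := by intro h; simp [hT1, h] at hl
      rw [if_pos (Or.inr hT1)] at hv1
      rw [if_neg (by tauto)] at hv2
      omega
    · have hT2 : l ∈ T' := by
        by_contra h
        simp [hT1, h] at hl
      rw [if_neg (by tauto)] at hv1
      rw [if_pos (Or.inr hT2)] at hv2
      omega
  -- value of each piece
  have hvalT : ∀ T ∈ Finset.powersetCard u S',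
      μ (A ∩ Dspec T) = μ A * (P ^ (u+1) * Q ^ (k-u)) := by
    intro T hT
    obtain ⟨hTsub, hTcard⟩ := Finset.mem_powersetCard.1 hT
    have hDs : Dspec T = {ω | ∀ l ∈ (Finset.univ : Finset (Fin (k+1))), B (i, l) ω = cT T l} := by
      simp only [hDspec]
    rw [hDs, hkey Finset.univ (cT T)]
    congr 1
    have step1 : ∏ l : Fin (k+1), μ {ω | B (i, l) ω = cT T l}
        = ∏ l : Fin (k+1), (if l = jfin ∨ l ∈ T then P else Q) := by
      apply Finset.prod_congr rfl
      intro l _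
      by_cases h : l = jfin ∨ l ∈ T
      · rw [if_pos h]
        have hone : cT T l = 1 := by simp only [hcT]; rw [if_pos h]
        rw [hone]
        exact hBern1 _
      · rw [if_neg h]
        have hzero : cT T l = 0 := by simp only [hcT]; rw [if_neg h]
        rw [hzero]
        exact hBern0 _
    rw [step1, Finset.prod_ite, Finset.prod_const, Finset.prod_const]
    rw [hfiltercard T hTsub, Finset.card_insert_of_notMem (hjfinT T hTsub), hTcard]
    congr 1
    rw [Finset.filter_not, Finset.card_sdiff_of_subset (Finset.filter_subset _ _)]
    rw [hfiltercard T hTsub, Finset.card_insert_of_notMem (hjfinT T hTsub), hTcard]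
    rw [Finset.card_univ, Fintype.card_fin]
    congr 1
    omega
  -- numerator value
  have hnum : μ ((A ∩ E1) ∩ {ω | Y i ω = (u:ℤ)})
      = (((k-j).choose u : ℕ) : ℝ≥0∞) * (μ A * (P ^ (u+1) * Q ^ (k-u))) := by
    rw [hmeq _ _ hnum_ev]
    rw [measure_biUnion_finset hdisj (fun T _ => hDspecm T)]
    rw [Finset.sum_congr rfl hvalT, Finset.sum_const, Finset.card_powersetCard, hS'card,
      nsmul_eq_mul]
  -- putting everything together
  rw [hCeq, ProbabilityTheory.cond_apply hCm μ, hnum, hdenom]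
  have ha0 : μ A ≠ 0 := hipos.ne'
  have hat : μ A ≠ ⊤ := measure_ne_top μ A
  have hden0 : μ A * (P * Q ^ j) ≠ 0 :=
    mul_ne_zero ha0 (mul_ne_zero hPne0 (pow_ne_zero _ hQne0))
  have hdent : μ A * (P * Q ^ j) ≠ ⊤ :=
    ENNReal.mul_ne_top hat (ENNReal.mul_ne_top hPnetop (ENNReal.pow_ne_top hQnetop))
  have hsplit : k - u = j + (k - j - u) := by omega
  have hRHS : ENNReal.ofReal (((k-j).choose u : ℝ) * p ^ u * (1-p) ^ (k-j-u))
      = (((k-j).choose u : ℕ) : ℝ≥0∞) * P ^ u * Q ^ (k-j-u) := by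
    rw [ENNReal.ofReal_mul (by positivity), ENNReal.ofReal_mul (by positivity),
      ENNReal.ofReal_pow hp0.le, ENNReal.ofReal_pow (by linarith), ENNReal.ofReal_natCast]
  rw [hRHS]
  calc (μ A * (P * Q ^ j))⁻¹
        * ((((k-j).choose u : ℕ) : ℝ≥0∞) * (μ A * (P ^ (u+1) * Q ^ (k-u))))
      = ((((k-j).choose u : ℕ) : ℝ≥0∞) * P ^ u * Q ^ (k-j-u))
        * ((μ A * (P * Q ^ j))⁻¹ * (μ A * (P * Q ^ j))) := by
        rw [hsplit, pow_add, pow_succ]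
        ring
    _ = (((k-j).choose u : ℕ) : ℝ≥0∞) * P ^ u * Q ^ (k-j-u) := by
        rw [ENNReal.inv_mul_cancel hden0 hdent, mul_one]
end

section
/- (All states positive recurrent.) Let k ≥ 1 be an integer and p ∈ (0, 1/(k+1)). Let (X_n)_{n≥1} be i.i.d. random variables with X_n + 1 distributed Binomial(k+1, p), and for each integer i ≥ 0 let Y^{(i)} be the reflected random walk Y^{(i)}_0 = i, Y^{(i)}_n = max(Y^{(i)}_{n−1} + X_n, 0). Then every state is positive recurrent: for every i ≥ 0, the first return time T_i = inf{ n ≥ 1 : Y^{(i)}_n = i } satisfies E[T_i] < ∞. -/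
set_option linter.unusedSectionVars false
set_option maxHeartbeats 1000000
open MeasureTheory ProbabilityTheory
open scoped ENNReal

noncomputable def qq (k : ℕ) (p : ℝ) (u : ℕ) : ℝ :=
  ((k + 1).choose u : ℝ) * p ^ u * (1 - p) ^ (k + 1 - u)

lemma qq_nonneg' (k : ℕ) (p : ℝ) (hp0 : 0 < p) (hp1 : p < 1) (u : ℕ) : 0 ≤ qq k p u := by
  unfold qq
  exact mul_nonneg (mul_nonneg (by positivity) (pow_nonneg hp0.le _))
    (pow_nonneg (sub_nonneg.mpr hp1.le) _)

/-- deterministic reflected walk driven by a sequence -/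
def rwalk (i0 : ℤ) (x : ℕ → ℤ) : ℕ → ℤ
  | 0 => i0
  | (m+1) => max (rwalk i0 x m + x m) 0

lemma rwalk_congr (i0 : ℤ) (x x' : ℕ → ℤ) (m : ℕ) (h : ∀ j < m, x j = x' j) :
    rwalk i0 x m = rwalk i0 x' m := by
  induction m with
  | zero => rfl
  | succ m ih =>
      simp only [rwalk]
      rw [ih (fun j hj => h j (Nat.lt_succ_of_lt hj)), h m (Nat.lt_succ_self m)]

lemma rwalk_nonneg (i0 : ℤ) (h : 0 ≤ i0) (x : ℕ → ℤ) (m : ℕ) : 0 ≤ rwalk i0 x m := by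
  cases m with
  | zero => exact h
  | succ m => exact le_max_right _ _

lemma measurableSet_pi_int {S : Finset ℕ} (A : Set ((j : S) → ℤ)) : MeasurableSet A := by
  have hsing : ∀ v : (j : S) → ℤ, MeasurableSet ({v} : Set ((j : S) → ℤ)) := by
    intro v
    have : ({v} : Set ((j : S) → ℤ)) = ⋂ j : S, (fun w : (j : S) → ℤ => w j) ⁻¹' {v j} := by
      ext w; simp [funext_iff]
    rw [this]
    exact MeasurableSet.iInter fun j => (measurable_pi_apply j) (measurableSet_singleton _)
  have : A = ⋃ v ∈ A, ({v} : Set ((j : S) → ℤ)) := by simp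
  rw [this]
  exact MeasurableSet.biUnion (Set.to_countable A) fun v _ => hsing v

section indep
variable {Ω : Type*} [MeasurableSpace Ω] {μ : Measure Ω} {X : ℕ → Ω → ℤ}

/-- tuple map -/
def tup (X : ℕ → Ω → ℤ) (S : Finset ℕ) : Ω → ((j : S) → ℤ) := fun ω j => X j ω

lemma measurable_tup (hmeas : ∀ n, Measurable (X n)) (S : Finset ℕ) :
    Measurable (tup X S) :=
  measurable_pi_lambda _ fun j => hmeas j

lemma indep_tup_events (hindep : iIndepFun X μ)
    (hmeas : ∀ n, Measurable (X n)) (S T : Finset ℕ) (hST : Disjoint S T)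
    (A : Set ((j : S) → ℤ)) (B : Set ((j : T) → ℤ)) :
    μ (tup X S ⁻¹' A ∩ tup X T ⁻¹' B) = μ (tup X S ⁻¹' A) * μ (tup X T ⁻¹' B) := by
  have h := hindep.indepFun_finset S T hST hmeas
  exact h.measure_inter_preimage_eq_mul A B (measurableSet_pi_int A) (measurableSet_pi_int B)

lemma meas_inter_singletons (hindep : iIndepFun X μ)
    (hmeas : ∀ n, Measurable (X n)) (S : Finset ℕ) (v : ℕ → ℤ) :
    μ (⋂ m ∈ S, {ω | X m ω = v m}) = ∏ m ∈ S, μ {ω | X m ω = v m} := by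
  have h := hindep.measure_inter_preimage_eq_mul (S := S)
    (sets := fun m => ({v m} : Set ℤ)) (fun i _ => measurableSet_singleton _)
  simpa [Set.preimage, Set.mem_singleton_iff] using h
end indep

section dist
variable {Ω : Type*} [MeasurableSpace Ω] (μ : Measure Ω) [IsProbabilityMeasure μ]
variable (k : ℕ) (p : ℝ)


lemma qq_sum : ∑ u ∈ Finset.range (k + 2), qq k p u = 1 := by
  have h := add_pow p (1 - p) (k + 1)
  simp only [add_sub_cancel, one_pow] at h
  rw [show ∑ u ∈ Finset.range (k + 2), qq k p u
      = ∑ u ∈ Finset.range (k + 1 + 1), p ^ u * (1 - p) ^ (k + 1 - u) * ((k+1).choose u : ℝ)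
      from Finset.sum_congr rfl (fun u _ => by unfold qq; ring)]
  rw [← h]

variable {X : ℕ → Ω → ℤ}

lemma atoms_union (n : ℕ) :
    (⋃ u ∈ Finset.range (k + 2), {ω | X n ω = (u : ℤ) - 1})
      = {ω | -1 ≤ X n ω ∧ X n ω ≤ k} := by
  ext ω
  simp only [Set.mem_iUnion, Finset.mem_range, Set.mem_setOf_eq]
  constructor
  · rintro ⟨u, hu, h⟩
    constructor
    · omega
    · have : (u : ℤ) ≤ k + 1 := by exact_mod_cast Nat.lt_succ_iff.mp hu
      omega
  · rintro ⟨h1, h2⟩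
    refine ⟨(X n ω + 1).toNat, ?_, ?_⟩
    · omega
    · omega

lemma meas_atoms_total (hmeas : ∀ n, Measurable (X n))
    (hdist : ∀ n, ∀ u : ℕ, u ≤ k + 1 →
      μ {ω | X n ω = (u : ℤ) - 1} = ENNReal.ofReal (qq k p u))
    (hp0 : 0 < p) (hp1 : p < 1) (n : ℕ) :
    μ {ω | -1 ≤ X n ω ∧ X n ω ≤ k} = 1 := by
  rw [← atoms_union k (X := X) n]
  rw [measure_biUnion_finset ?_ ?_]
  · rw [Finset.sum_congr rfl (fun u hu => hdist n u (by
      simp only [Finset.mem_range] at hu; omega))]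
    rw [← ENNReal.ofReal_sum_of_nonneg (fun u _ => qq_nonneg' k p hp0 hp1 u)]
    rw [qq_sum]
    simp
  · intro a _ b _ hab
    simp only [Function.onFun, Set.disjoint_left, Set.mem_setOf_eq]
    intro ω h1 h2
    apply hab
    have : (a : ℤ) = b := by omega
    exact_mod_cast this
  · intro u _
    exact (hmeas n) (measurableSet_singleton _)

lemma meas_G (hmeas : ∀ n, Measurable (X n))
    (hdist : ∀ n, ∀ u : ℕ, u ≤ k + 1 →
      μ {ω | X n ω = (u : ℤ) - 1} = ENNReal.ofReal (qq k p u))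
    (hp0 : 0 < p) (hp1 : p < 1) :
    μ {ω | ∀ n, -1 ≤ X n ω ∧ X n ω ≤ (k : ℤ)}ᶜ = 0 := by
  have : {ω | ∀ n, -1 ≤ X n ω ∧ X n ω ≤ (k : ℤ)}ᶜ
      = ⋃ n, {ω | -1 ≤ X n ω ∧ X n ω ≤ (k : ℤ)}ᶜ := by
    ext ω; simp [not_forall]
  rw [this]
  refine measure_iUnion_null fun n => ?_
  rw [measure_compl ?_ (measure_ne_top μ _)]
  · rw [meas_atoms_total μ k p hmeas hdist hp0 hp1 n]; simp
  · exact measurableSet_le (measurable_const) (hmeas n) |>.inter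
      (measurableSet_le (hmeas n) measurable_const) |>.congr (by ext ω; simp [Set.mem_setOf_eq]; tauto)
end dist

noncomputable def lam (k : ℕ) (p : ℝ) : ℝ := (1 - ((k:ℝ)+1) * p) / 2

noncomputable def rho (k : ℕ) (p : ℝ) : ℝ :=
  ∑ u ∈ Finset.range (k + 2), qq k p u * Real.exp (lam k p * ((u : ℝ) - 1))

lemma lam_pos (k : ℕ) (p : ℝ) (hkp : ((k:ℝ)+1) * p < 1) : 0 < lam k p := by
  unfold lam; linarith

lemma lam_lt_one (k : ℕ) (p : ℝ) (hp0 : 0 < p) : lam k p < 1 := by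
  unfold lam
  nlinarith [mul_pos (by positivity : (0:ℝ) < (k:ℝ)+1) hp0]

lemma p_lt_one (k : ℕ) (p : ℝ) (hp0 : 0 < p) (hkp : ((k:ℝ)+1) * p < 1) : p < 1 := by
  nlinarith [(by positivity : (0:ℝ) ≤ (k:ℝ)), mul_pos (by positivity : (0:ℝ) < (k:ℝ)+1) hp0]


lemma rho_nonneg (k : ℕ) (p : ℝ) (hp0 : 0 < p) (hp1 : p < 1) : 0 ≤ rho k p :=
  Finset.sum_nonneg fun u _ => mul_nonneg (qq_nonneg' k p hp0 hp1 u) (Real.exp_nonneg _)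

lemma rho_eq (k : ℕ) (p : ℝ) : rho k p
    = Real.exp (-(lam k p)) * (p * Real.exp (lam k p) + (1 - p)) ^ (k + 1) := by
  set l := lam k p with hl
  have h := add_pow (p * Real.exp l) (1 - p) (k + 1)
  unfold rho qq
  rw [h, Finset.mul_sum]
  refine Finset.sum_congr rfl fun u hu => ?_
  rw [mul_pow, ← Real.exp_nat_mul]
  have he : Real.exp (l * ((u:ℝ) - 1)) = Real.exp ((u:ℝ) * l) * Real.exp (-l) := by
    rw [← Real.exp_add]; ring_nf
  rw [he]
  ring

lemma rho_lt_one (k : ℕ) (p : ℝ) (hp0 : 0 < p) (hkp : ((k:ℝ)+1) * p < 1) :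
    rho k p < 1 := by
  set l := lam k p with hl
  have hl0 : 0 < l := lam_pos k p hkp
  have hl1 : l < 1 := lam_lt_one k p hp0
  have h1l : 0 < 1 - l := by linarith
  have hexp_le : Real.exp l ≤ (1 - l)⁻¹ := by
    have h1 : 1 - l ≤ Real.exp (-l) := by
      have := Real.add_one_le_exp (-l); linarith
    rw [Real.exp_neg] at h1
    calc Real.exp l = ((Real.exp l)⁻¹)⁻¹ := by rw [inv_inv]
      _ ≤ (1 - l)⁻¹ := inv_anti₀ h1l h1
  have hbase : p * Real.exp l + (1 - p) ≤ Real.exp (p * (l / (1-l))) := by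
    have hstep : Real.exp l - 1 ≤ l / (1-l) := by
      have : (1:ℝ)/(1-l) - 1 = l / (1-l) := by field_simp; ring
      rw [← this]
      have : (1:ℝ)/(1-l) = (1-l)⁻¹ := one_div _
      linarith [hexp_le]
    have h2 : p * Real.exp l + (1 - p) ≤ 1 + p * (l / (1-l)) := by nlinarith [hp0.le]
    have h3 := Real.add_one_le_exp (p * (l / (1-l)))
    linarith
  have hbase0 : 0 ≤ p * Real.exp l + (1 - p) := by
    have := (p_lt_one k p hp0 hkp).le
    nlinarith [Real.exp_pos l, hp0.le]
  rw [rho_eq]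
  rw [← hl]
  calc Real.exp (-l) * (p * Real.exp l + (1 - p)) ^ (k + 1)
      ≤ Real.exp (-l) * (Real.exp (p * (l / (1 - l)))) ^ (k + 1) := by
        refine mul_le_mul_of_nonneg_left ?_ (Real.exp_nonneg _)
        exact pow_le_pow_left₀ hbase0 hbase _
    _ = Real.exp (-l + ((k:ℝ)+1) * (p * (l / (1 - l)))) := by
        rw [← Real.exp_nat_mul, ← Real.exp_add]
        norm_num
    _ < 1 := by
        rw [Real.exp_lt_one_iff]
        have hcl : ((k:ℝ)+1) * p < 1 - l := by
          rw [hl]; unfold lam; nlinarith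
        have : ((k:ℝ)+1) * (p * (l / (1-l))) = (((k:ℝ)+1) * p) * l / (1-l) := by ring
        rw [this]
        have hlt : (((k:ℝ)+1) * p) * l / (1-l) < l := by
          rw [div_lt_iff₀ h1l]
          calc (((k:ℝ)+1) * p) * l < (1 - l) * l := mul_lt_mul_of_pos_right hcl hl0
            _ = l * (1-l) := by ring
        linarith
        

lemma path_decomp (k : ℕ) (i : ℕ) (n : ℕ) (hk : 1 ≤ k) (x : ℕ → ℤ)
    (hG : ∀ m, -1 ≤ x m ∧ x m ≤ (k:ℤ))
    (hno : ∀ m, 1 ≤ m → m ≤ n → rwalk (i:ℤ) x m ≠ (i:ℤ)) :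
    ∃ s, s ≤ n ∧ (∀ m, 1 ≤ m → m ≤ s → rwalk (i:ℤ) x m < (i:ℤ)) ∧
      (1 - (k:ℤ) ≤ ∑ m ∈ Finset.Ico (s+1) n, x m) := by
  classical
  by_cases hex : ∃ m, (1 ≤ m ∧ m ≤ n) ∧ (i:ℤ) < rwalk (i:ℤ) x m
  · set P : ℕ → Prop := fun m => (1 ≤ m ∧ m ≤ n) ∧ (i:ℤ) < rwalk (i:ℤ) x m with hP
    have hPfind := Nat.find_spec hex
    set m₀ := Nat.find hex with hm₀
    obtain ⟨⟨hm1, hmn⟩, hgt⟩ := hPfind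
    have hmin : ∀ m, m < m₀ → ¬ ((1 ≤ m ∧ m ≤ n) ∧ (i:ℤ) < rwalk (i:ℤ) x m) :=
      fun m hm => Nat.find_min hex hm
    -- below the first up-crossing, the walk is < i
    have ha : ∀ m, 1 ≤ m → m ≤ m₀ - 1 → rwalk (i:ℤ) x m < (i:ℤ) := by
      intro m h1 h2
      have hmlt : m < m₀ := by omega
      have hmn' : m ≤ n := by omega
      have hne := hno m h1 hmn'
      have := hmin m hmlt
      have hnotgt : ¬ ((i:ℤ) < rwalk (i:ℤ) x m) := fun h => this ⟨⟨h1, hmn'⟩, h⟩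
      omega
    -- from m₀ on the walk stays > i
    have hb : ∀ m, m₀ ≤ m → m ≤ n → (i:ℤ) + 1 ≤ rwalk (i:ℤ) x m := by
      refine Nat.le_induction ?_ ?_
      · intro _; omega
      · intro m hm ihm hm1n
        have h1 : (i:ℤ) + 1 ≤ rwalk (i:ℤ) x m := ihm (by omega)
        have hxm := hG m
        have hmax : rwalk (i:ℤ) x m + x m ≤ rwalk (i:ℤ) x (m+1) := by
          simp only [rwalk]; exact le_max_left _ _
        have hne := hno (m+1) (by omega) hm1n
        omega
    -- no reflection above i : sum formula
    have hc : ∀ m, m₀ ≤ m → m ≤ n →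
        rwalk (i:ℤ) x m = rwalk (i:ℤ) x m₀ + ∑ t ∈ Finset.Ico m₀ m, x t := by
      refine Nat.le_induction ?_ ?_
      · intro _; simp
      · intro m hm ihm hm1n
        have hI : rwalk (i:ℤ) x m = rwalk (i:ℤ) x m₀ + ∑ t ∈ Finset.Ico m₀ m, x t :=
          ihm (by omega)
        have h1 : (i:ℤ) + 1 ≤ rwalk (i:ℤ) x m := hb m hm (by omega)
        have hxm := hG m
        have hposi : (0:ℤ) ≤ (i:ℤ) := Int.ofNat_nonneg i
        have hstep : rwalk (i:ℤ) x (m+1) = rwalk (i:ℤ) x m + x m := by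
          simp only [rwalk]
          exact max_eq_left (by omega)
        rw [Finset.sum_Ico_succ_top hm, hstep, hI]
        ring
    -- the walk at m₀ is at most i + k
    have hd : rwalk (i:ℤ) x m₀ ≤ (i:ℤ) + k := by
      have hm0 : m₀ = (m₀ - 1) + 1 := by omega
      have hprev : rwalk (i:ℤ) x (m₀ - 1) ≤ (i:ℤ) := by
        rcases Nat.eq_zero_or_pos (m₀ - 1) with h0 | hpos
        · rw [h0]; simp [rwalk]
        · exact le_of_lt (ha (m₀-1) hpos (le_refl _))
      have hx := hG (m₀ - 1)
      rw [hm0]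
      simp only [rwalk]
      have : (0:ℤ) ≤ (i:ℤ) + k := by positivity
      omega
  -- conclusion with s = m₀ - 1
    refine ⟨m₀ - 1, by omega, ha, ?_⟩
    have hs1 : m₀ - 1 + 1 = m₀ := by omega
    rw [hs1]
    have hsum := hc n hmn (le_refl n)
    have hn := hb n hmn (le_refl n)
    omega
  · refine ⟨n, le_refl n, ?_, ?_⟩
    · intro m h1 h2
      have hne := hno m h1 h2
      have hle : ¬ ((i:ℤ) < rwalk (i:ℤ) x m) := fun h => hex ⟨m, ⟨h1, h2⟩, h⟩
      omega
    · rw [Finset.Ico_eq_empty (by omega), Finset.sum_empty]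
      have : (1:ℤ) ≤ (k:ℤ) := by exact_mod_cast hk
      omega

/-- window lemma: if all steps in the `j`-th window of length `w` equal `k`, the walk
rises to at least `w ≤ i` is violated... i.e. contradiction with staying `< i`. -/
lemma path_window (k i w s : ℕ) (hk : 1 ≤ k) (hwi : i ≤ w) (hw : 1 ≤ w) (x : ℕ → ℤ)
    (hB : ∀ m, 1 ≤ m → m ≤ s → rwalk (i:ℤ) x m < (i:ℤ))
    (j : ℕ) (hj : j < s / w)
    (hall : ∀ t, t < w → x (j*w+t) = (k:ℤ)) : False := by
  have hup : ∀ t, t ≤ w → ((t:ℤ) * k) ≤ rwalk (i:ℤ) x (j*w + t) := by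
    intro t
    induction t with
    | zero =>
        intro _
        simpa using rwalk_nonneg (i:ℤ) (Int.ofNat_nonneg i) x (j*w)
    | succ t iht =>
        intro htw
        have h1 : ((t:ℤ) * k) ≤ rwalk (i:ℤ) x (j*w + t) := iht (by omega)
        have hx : x (j*w+t) = (k:ℤ) := hall t (by omega)
        have hstep : rwalk (i:ℤ) x (j*w + t) + x (j*w+t) ≤ rwalk (i:ℤ) x (j*w + t + 1) := by
          simp only [rwalk]; exact le_max_left _ _
        have hidx : j*w + (t+1) = j*w + t + 1 := by omega
        rw [hidx]
        have hexp : ((t:ℤ)+1) * (k:ℤ) = (t:ℤ)*(k:ℤ) + (k:ℤ) := by ring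
        push_cast
        rw [hexp]
        omega
  have hfin := hup w (le_refl w)
  have hmem : 1 ≤ j*w + w ∧ j*w + w ≤ s := by
    constructor
    · omega
    · have h1 : (j+1) * w ≤ (s/w) * w := Nat.mul_le_mul_right w (by omega)
      have h2 : (s/w) * w ≤ s := Nat.div_mul_le_self s w
      have h3 : (j+1) * w = j*w + w := Nat.succ_mul j w
      omega
  have hlt := hB (j*w+w) hmem.1 hmem.2
  have hik : (i:ℤ) ≤ (w:ℤ) * k := by
    have h1 : (i:ℤ) ≤ (w:ℤ) := by exact_mod_cast hwi
    have h2 : (1:ℤ) ≤ (k:ℤ) := by exact_mod_cast hk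
    nlinarith
  linarith [hfin, hlt, hik]


section chernoff
variable {Ω : Type*} [MeasurableSpace Ω] (μ : Measure Ω) [IsProbabilityMeasure μ]
variable (k : ℕ) (p : ℝ) {X : ℕ → Ω → ℤ}

lemma meas_bad (hmeas : ∀ n, Measurable (X n))
    (hdist : ∀ n, ∀ u : ℕ, u ≤ k + 1 →
      μ {ω | X n ω = (u : ℤ) - 1} = ENNReal.ofReal (qq k p u))
    (hp0 : 0 < p) (hp1 : p < 1) (n : ℕ) :
    μ {ω | ¬(-1 ≤ X n ω ∧ X n ω ≤ (k:ℤ))} = 0 := by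
  have hms : MeasurableSet {ω | -1 ≤ X n ω ∧ X n ω ≤ (k:ℤ)} := by
    have : {ω | -1 ≤ X n ω ∧ X n ω ≤ (k:ℤ)} = X n ⁻¹' (Set.Icc (-1) k) := by
      ext ω; simp [Set.mem_Icc]
    rw [this]; exact (hmeas n) measurableSet_Icc
  have h1 : {ω | ¬(-1 ≤ X n ω ∧ X n ω ≤ (k:ℤ))} = {ω | -1 ≤ X n ω ∧ X n ω ≤ (k:ℤ)}ᶜ := rfl
  rw [h1, measure_compl hms (measure_ne_top μ _), meas_atoms_total μ k p hmeas hdist hp0 hp1 n]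
  simp

lemma rho_reindex (c : ℤ) :
    ∑ u ∈ Finset.range (k + 2),
        qq k p u * (Real.exp (-(lam k p) * (c:ℝ)) * Real.exp (lam k p * ((u:ℝ) - 1)))
      = Real.exp (-(lam k p) * (c:ℝ)) * rho k p := by
  rw [rho, Finset.mul_sum]
  exact Finset.sum_congr rfl fun u _ => by ring

lemma chernoff (hindep : iIndepFun X μ)
    (hmeas : ∀ n, Measurable (X n))
    (hdist : ∀ n, ∀ u : ℕ, u ≤ k + 1 →
      μ {ω | X n ω = (u : ℤ) - 1} = ENNReal.ofReal (qq k p u))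
    (hp0 : 0 < p) (hkp : ((k:ℝ)+1) * p < 1) :
    ∀ (S : Finset ℕ) (c : ℤ),
      μ {ω | c ≤ ∑ m ∈ S, X m ω}
        ≤ ENNReal.ofReal (Real.exp (-(lam k p) * (c:ℝ)) * rho k p ^ S.card) := by
  have hp1 := p_lt_one k p hp0 hkp
  intro S
  induction S using Finset.induction_on with
  | empty =>
      intro c
      simp only [Finset.sum_empty, Finset.card_empty, pow_zero, mul_one]
      by_cases hc : c ≤ 0
      · calc μ {ω | c ≤ (0:ℤ)} ≤ 1 := prob_le_one
          _ ≤ ENNReal.ofReal (Real.exp (-(lam k p) * (c:ℝ))) := by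
              rw [← ENNReal.ofReal_one]
              exact ENNReal.ofReal_le_ofReal (Real.one_le_exp (by
                have : (c:ℝ) ≤ 0 := by exact_mod_cast hc
                have hl : 0 ≤ lam k p := by
                  unfold lam; nlinarith
                nlinarith))
      · have : {ω : Ω | c ≤ (0:ℤ)} = ∅ := by
          ext ω; simp only [Set.mem_setOf_eq, Set.mem_empty_iff_false, iff_false]; omega
        rw [this]; simp
  | @insert a S' hnotmem ih =>
      intro c
      have hsum_meas : Measurable (fun ω => ∑ m ∈ S', X m ω) := by
        exact Finset.measurable_sum S' fun m _ => hmeas m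
      have hindep_pair : IndepFun (∑ j ∈ S', X j) (X a) μ :=
        hindep.indepFun_finsetSum_of_notMem hmeas hnotmem
      -- decomposition
      have hsub : {ω | c ≤ ∑ m ∈ insert a S', X m ω}
          ⊆ (⋃ u ∈ Finset.range (k+2),
              ({ω | (c - ((u:ℤ) - 1)) ≤ ∑ m ∈ S', X m ω} ∩ {ω | X a ω = (u:ℤ) - 1}))
            ∪ {ω | ¬(-1 ≤ X a ω ∧ X a ω ≤ (k:ℤ))} := by
        intro ω hω
        simp only [Set.mem_setOf_eq, Finset.sum_insert hnotmem] at hω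
        by_cases hgood : -1 ≤ X a ω ∧ X a ω ≤ (k:ℤ)
        · left
          simp only [Set.mem_iUnion, Finset.mem_range, Set.mem_inter_iff, Set.mem_setOf_eq]
          refine ⟨(X a ω + 1).toNat, by omega, by omega, by omega⟩
        · right; exact hgood
      calc μ {ω | c ≤ ∑ m ∈ insert a S', X m ω}
          ≤ μ (⋃ u ∈ Finset.range (k+2),
              ({ω | (c - ((u:ℤ) - 1)) ≤ ∑ m ∈ S', X m ω} ∩ {ω | X a ω = (u:ℤ) - 1}))
            + μ {ω | ¬(-1 ≤ X a ω ∧ X a ω ≤ (k:ℤ))} :=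
            le_trans (measure_mono hsub) (measure_union_le _ _)
        _ = μ (⋃ u ∈ Finset.range (k+2),
              ({ω | (c - ((u:ℤ) - 1)) ≤ ∑ m ∈ S', X m ω} ∩ {ω | X a ω = (u:ℤ) - 1})) := by
            rw [meas_bad μ k p hmeas hdist hp0 hp1 a, add_zero]
        _ ≤ ∑ u ∈ Finset.range (k+2),
              μ ({ω | (c - ((u:ℤ) - 1)) ≤ ∑ m ∈ S', X m ω} ∩ {ω | X a ω = (u:ℤ) - 1}) :=
            measure_biUnion_finset_le _ _
        _ ≤ ∑ u ∈ Finset.range (k+2),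
              ENNReal.ofReal (qq k p u *
                (Real.exp (-(lam k p) * (c:ℝ)) * Real.exp (lam k p * ((u:ℝ) - 1)) * rho k p ^ S'.card)) := by
            refine Finset.sum_le_sum fun u hu => ?_
            have hu' : u ≤ k + 1 := by simp only [Finset.mem_range] at hu; omega
            have hprod : μ ({ω | (c - ((u:ℤ) - 1)) ≤ ∑ m ∈ S', X m ω} ∩ {ω | X a ω = (u:ℤ) - 1})
                = μ {ω | (c - ((u:ℤ) - 1)) ≤ ∑ m ∈ S', X m ω} * μ {ω | X a ω = (u:ℤ) - 1} := by
              have := hindep_pair.measure_inter_preimage_eq_mul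
                {y : ℤ | (c - ((u:ℤ) - 1)) ≤ y} {(u:ℤ) - 1}
                (measurableSet_le measurable_const measurable_id) (measurableSet_singleton _)
              simpa [Set.preimage, Finset.sum_apply] using this
            rw [hprod, hdist a u hu']
            have hih := ih (c - ((u:ℤ) - 1))
            calc μ {ω | (c - ((u:ℤ) - 1)) ≤ ∑ m ∈ S', X m ω} * ENNReal.ofReal (qq k p u)
                ≤ ENNReal.ofReal (Real.exp (-(lam k p) * ((c - ((u:ℤ) - 1) : ℤ):ℝ)) * rho k p ^ S'.card)
                    * ENNReal.ofReal (qq k p u) := by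
                  exact mul_le_mul_left hih _
              _ = ENNReal.ofReal (qq k p u *
                    (Real.exp (-(lam k p) * (c:ℝ)) * Real.exp (lam k p * ((u:ℝ) - 1)) * rho k p ^ S'.card)) := by
                  rw [← ENNReal.ofReal_mul (mul_nonneg (Real.exp_nonneg _)
                    (pow_nonneg (rho_nonneg k p hp0 hp1) _))]
                  congr 1
                  have hcast : (((c - ((u:ℤ) - 1)) : ℤ) : ℝ) = (c:ℝ) - ((u:ℝ) - 1) := by
                    push_cast; ring
                  rw [hcast]
                  rw [show -(lam k p) * ((c:ℝ) - ((u:ℝ) - 1))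
                      = -(lam k p) * (c:ℝ) + lam k p * ((u:ℝ) - 1) by ring]
                  rw [Real.exp_add]
                  ring
        _ = ENNReal.ofReal (Real.exp (-(lam k p) * (c:ℝ)) * rho k p ^ (insert a S').card) := by
            rw [← ENNReal.ofReal_sum_of_nonneg]
            · congr 1
              have hfac : ∑ u ∈ Finset.range (k+2), qq k p u *
                    (Real.exp (-(lam k p) * (c:ℝ)) * Real.exp (lam k p * ((u:ℝ) - 1)) * rho k p ^ S'.card)
                  = (∑ u ∈ Finset.range (k+2), qq k p u *
                      (Real.exp (-(lam k p) * (c:ℝ)) * Real.exp (lam k p * ((u:ℝ) - 1)))) * rho k p ^ S'.card := by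
                rw [Finset.sum_mul]
                exact Finset.sum_congr rfl fun u _ => by ring
              rw [hfac, rho_reindex k p c, Finset.card_insert_of_notMem hnotmem, pow_succ]
              ring
            · intro u _
              have h1 := qq_nonneg' k p hp0 hp1 u
              have h2 := rho_nonneg k p hp0 hp1
              positivity
end chernoff

section events
variable {Ω : Type*} [MeasurableSpace Ω] (μ : Measure Ω) [IsProbabilityMeasure μ]
variable (k : ℕ) (p : ℝ) (X : ℕ → Ω → ℤ)

/-- extension of a tuple on a finset to a full sequence -/
def extv (s : Finset ℕ) (v : (x : s) → ℤ) : ℕ → ℤ :=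
  fun j => if h : j ∈ s then v ⟨j, h⟩ else 0

/-- restriction map between tuple spaces -/
def rmap (s t : Finset ℕ) (v : (x : t) → ℤ) : (x : s) → ℤ :=
  fun x => if h : (x : ℕ) ∈ t then v ⟨x, h⟩ else 0

lemma tup_rmap (s t : Finset ℕ) (hst : s ⊆ t) (ω : Ω) :
    rmap s t (tup X t ω) = tup X s ω := by
  funext x
  simp only [rmap, tup, dif_pos (hst x.2)]

/-- the `j`-th all-`k` window event -/
def Wev (w j : ℕ) : Set Ω :=
  ⋂ m ∈ Finset.Ico (j*w) (j*w+w), {ω | X m ω = (k:ℤ)}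

lemma Wev_meas (hmeas : ∀ n, Measurable (X n)) (w j : ℕ) : MeasurableSet (Wev k X w j) :=
  MeasurableSet.biInter (Finset.Ico _ _).countable_toSet
    (fun m _ => (hmeas m) (measurableSet_singleton _))

lemma Wev_measure (hindep : iIndepFun X μ)
    (hmeas : ∀ n, Measurable (X n))
    (hdist : ∀ n, ∀ u : ℕ, u ≤ k + 1 →
      μ {ω | X n ω = (u : ℤ) - 1} = ENNReal.ofReal (qq k p u))
    (w j : ℕ) :
    μ (Wev k X w j) = ENNReal.ofReal (p ^ (k+1)) ^ w := by
  have h := meas_inter_singletons (μ := μ) hindep hmeas (Finset.Ico (j*w) (j*w+w))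
    (fun _ => (k:ℤ))
  rw [Wev, h]
  have hsingle : ∀ m, μ {ω | X m ω = (k:ℤ)} = ENNReal.ofReal (p ^ (k+1)) := by
    intro m
    have h2 := hdist m (k+1) (le_refl _)
    have hset : {ω | X m ω = ((k+1 : ℕ) : ℤ) - 1} = {ω | X m ω = (k:ℤ)} := by
      ext ω; simp only [Set.mem_setOf_eq]; constructor <;> (intro h; push_cast at *; omega)
    rw [hset] at h2
    rw [h2]
    congr 1
    simp [qq, Nat.choose_self]
  rw [Finset.prod_congr rfl (fun m _ => hsingle m), Finset.prod_const, Nat.card_Ico]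
  congr 1
  omega

lemma Wev_preimage (w j : ℕ) :
    Wev k X w j = tup X (Finset.Ico (j*w) (j*w+w)) ⁻¹' {v | ∀ t, v t = (k:ℤ)} := by
  ext ω
  simp only [Wev, Set.mem_iInter, Set.mem_setOf_eq, Set.mem_preimage, tup]
  constructor
  · intro h t; exact h t.1 t.2
  · intro h m hm; exact h ⟨m, hm⟩

lemma windows_bound (hindep : iIndepFun X μ)
    (hmeas : ∀ n, Measurable (X n))
    (hdist : ∀ n, ∀ u : ℕ, u ≤ k + 1 →
      μ {ω | X n ω = (u : ℤ) - 1} = ENNReal.ofReal (qq k p u))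
    (hp0 : 0 < p) (w : ℕ) (hw : 1 ≤ w) (J : ℕ) :
    μ (⋂ j ∈ Finset.range J, (Wev k X w j)ᶜ)
      ≤ ENNReal.ofReal (1 - (p ^ (k+1)) ^ w) ^ J := by
  induction J with
  | zero => simp
  | succ J ih =>
      have hsub : ∀ j, j < J → Finset.Ico (j*w) (j*w+w) ⊆ Finset.range (J*w) := by
        intro j hj
        intro m hm
        simp only [Finset.mem_Ico] at hm
        simp only [Finset.mem_range]
        have h1 : (j+1) * w ≤ J * w := Nat.mul_le_mul_right w (by omega)
        have h2 : (j+1) * w = j*w + w := Nat.succ_mul j w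
        omega
      have hA : (⋂ j ∈ Finset.range J, (Wev k X w j)ᶜ)
          = tup X (Finset.range (J*w)) ⁻¹'
            (⋂ j ∈ Finset.range J,
              (rmap (Finset.Ico (j*w) (j*w+w)) (Finset.range (J*w)) ⁻¹'
                ({v | ∀ t, v t = (k:ℤ)}ᶜ))) := by
        rw [Set.preimage_iInter₂]
        refine Set.iInter₂_congr fun j hj => ?_
        rw [Wev_preimage]
        rw [← Set.preimage_compl, ← Set.preimage_comp]
        have : (rmap (Finset.Ico (j*w) (j*w+w)) (Finset.range (J*w))) ∘
            (tup X (Finset.range (J*w))) = tup X (Finset.Ico (j*w) (j*w+w)) := by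
          funext ω
          exact tup_rmap X _ _ (hsub j (Finset.mem_range.mp hj)) ω
        rw [this]
      have hsplit : (⋂ j ∈ Finset.range (J+1), (Wev k X w j)ᶜ)
          = (⋂ j ∈ Finset.range J, (Wev k X w j)ᶜ) ∩ (Wev k X w J)ᶜ := by
        rw [Finset.range_add_one, Finset.set_biInter_insert]
        exact Set.inter_comm _ _
      rw [hsplit, hA, Wev_preimage k X w J, ← Set.preimage_compl]
      have hdisj : Disjoint (Finset.range (J*w)) (Finset.Ico (J*w) (J*w+w)) := by
        rw [Finset.disjoint_left]
        intro m hm hm'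
        simp only [Finset.mem_range] at hm
        simp only [Finset.mem_Ico] at hm'
        omega
      rw [indep_tup_events hindep hmeas _ _ hdisj _ _]
      have hWc : μ ((tup X (Finset.Ico (J*w) (J*w+w))) ⁻¹' {v | ∀ t, v t = (k:ℤ)}ᶜ)
          ≤ ENNReal.ofReal (1 - (p ^ (k+1)) ^ w) := by
        rw [Set.preimage_compl, ← Wev_preimage]
        rw [measure_compl (Wev_meas k X hmeas w J) (measure_ne_top μ _)]
        rw [Wev_measure μ k p X hindep hmeas hdist w J, measure_univ]
        rw [← ENNReal.ofReal_pow (pow_nonneg hp0.le _), ← ENNReal.ofReal_one,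
          ← ENNReal.ofReal_sub 1 (pow_nonneg (pow_nonneg hp0.le _) _)]
      calc μ (tup X (Finset.range (J*w)) ⁻¹' _) * μ ((tup X (Finset.Ico (J*w) (J*w+w))) ⁻¹' {v | ∀ t, v t = (k:ℤ)}ᶜ)
          ≤ (ENNReal.ofReal (1 - (p ^ (k+1)) ^ w) ^ J) * ENNReal.ofReal (1 - (p ^ (k+1)) ^ w) := by
            refine mul_le_mul' ?_ hWc
            rw [← hA]; exact ih
        _ = ENNReal.ofReal (1 - (p ^ (k+1)) ^ w) ^ (J+1) := (pow_succ _ J).symm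

end events

section events2
variable {Ω : Type*} [MeasurableSpace Ω] (μ : Measure Ω) [IsProbabilityMeasure μ]
variable (k : ℕ) (p : ℝ) (X : ℕ → Ω → ℤ) (i : ℕ)

/-- event: the walk stays strictly below `i` during `[1,s]` -/
def Bev (s : ℕ) : Set Ω :=
  {ω | ∀ m, 1 ≤ m → m ≤ s → rwalk (i:ℤ) (fun j => X j ω) m < (i:ℤ)}

/-- event: increments over `[s+1, n)` sum to at least `1 - k` -/
def Cev (s n : ℕ) : Set Ω :=
  {ω | 1 - (k:ℤ) ≤ ∑ m ∈ Finset.Ico (s+1) n, X m ω}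

lemma Bev_subset_windows (hk : 1 ≤ k) (w : ℕ) (hwi : i ≤ w) (hw : 1 ≤ w) (s : ℕ) :
    Bev X i s ⊆ ⋂ j ∈ Finset.range (s/w), (Wev k X w j)ᶜ := by
  intro ω hω
  simp only [Set.mem_iInter, Set.mem_compl_iff]
  intro j hj hWj
  simp only [Wev, Set.mem_iInter, Set.mem_setOf_eq] at hWj
  refine path_window k i w s hk hwi hw (fun j => X j ω) hω j (Finset.mem_range.mp hj) ?_
  intro t ht
  exact hWj (j*w+t) (by simp only [Finset.mem_Ico]; omega)

lemma Bev_bound (hindep : iIndepFun X μ)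
    (hmeas : ∀ n, Measurable (X n))
    (hdist : ∀ n, ∀ u : ℕ, u ≤ k + 1 →
      μ {ω | X n ω = (u : ℤ) - 1} = ENNReal.ofReal (qq k p u))
    (hp0 : 0 < p) (hk : 1 ≤ k) (w : ℕ) (hwi : i ≤ w) (hw : 1 ≤ w) (s : ℕ) :
    μ (Bev X i s) ≤ ENNReal.ofReal (1 - (p ^ (k+1)) ^ w) ^ (s/w) :=
  le_trans (measure_mono (Bev_subset_windows k X i hk w hwi hw s))
    (windows_bound μ k p X hindep hmeas hdist hp0 w hw (s/w))

lemma Bev_preimage (s : ℕ) :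
    Bev X i s = tup X (Finset.range s) ⁻¹'
      {v | ∀ m, 1 ≤ m → m ≤ s → rwalk (i:ℤ) (extv (Finset.range s) v) m < (i:ℤ)} := by
  ext ω
  simp only [Bev, Set.mem_setOf_eq, Set.mem_preimage]
  have key : ∀ m, m ≤ s →
      rwalk (i:ℤ) (extv (Finset.range s) (tup X (Finset.range s) ω)) m
        = rwalk (i:ℤ) (fun j => X j ω) m := by
    intro m hm
    refine rwalk_congr _ _ _ m (fun j hj => ?_)
    have hjs : j ∈ Finset.range s := Finset.mem_range.mpr (by omega)
    simp only [extv, tup, dif_pos hjs]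
  constructor
  · intro h m h1 h2; rw [key m h2]; exact h m h1 h2
  · intro h m h1 h2; have := h m h1 h2; rwa [key m h2] at this

lemma Cev_preimage (s n : ℕ) :
    Cev k X s n = tup X (Finset.Ico (s+1) n) ⁻¹'
      {v | 1 - (k:ℤ) ≤ ∑ t, v t} := by
  ext ω
  simp only [Cev, Set.mem_setOf_eq, Set.mem_preimage, tup]
  rw [Finset.sum_coe_sort (Finset.Ico (s+1) n) (fun m => X m ω)]

lemma BC_prod (hindep : iIndepFun X μ)
    (hmeas : ∀ n, Measurable (X n)) (s n : ℕ) :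
    μ (Bev X i s ∩ Cev k X s n) = μ (Bev X i s) * μ (Cev k X s n) := by
  rw [Bev_preimage X i s, Cev_preimage k X s n]
  refine indep_tup_events hindep hmeas _ _ ?_ _ _
  rw [Finset.disjoint_left]
  intro m hm hm'
  simp only [Finset.mem_range] at hm
  simp only [Finset.mem_Ico] at hm'
  omega

lemma Cev_bound (hindep : iIndepFun X μ)
    (hmeas : ∀ n, Measurable (X n))
    (hdist : ∀ n, ∀ u : ℕ, u ≤ k + 1 →
      μ {ω | X n ω = (u : ℤ) - 1} = ENNReal.ofReal (qq k p u))
    (hp0 : 0 < p) (hkp : ((k:ℝ)+1) * p < 1) (s n : ℕ) :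
    μ (Cev k X s n) ≤ ENNReal.ofReal
      (Real.exp (lam k p * ((k:ℝ) - 1)) * rho k p ^ (n - (s+1))) := by
  have h := chernoff μ k p hindep hmeas hdist hp0 hkp (Finset.Ico (s+1) n) (1 - (k:ℤ))
  have hcard : (Finset.Ico (s+1) n).card = n - (s+1) := Nat.card_Ico _ _
  have hexp : -(lam k p) * (((1 - (k:ℤ)):ℤ):ℝ) = lam k p * ((k:ℝ) - 1) := by
    push_cast; ring
  rw [hcard, hexp] at h
  exact h

/-- Master bound for the no-return event. -/
lemma master_bound (hindep : iIndepFun X μ)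
    (hmeas : ∀ n, Measurable (X n))
    (hdist : ∀ n, ∀ u : ℕ, u ≤ k + 1 →
      μ {ω | X n ω = (u : ℤ) - 1} = ENNReal.ofReal (qq k p u))
    (hp0 : 0 < p) (hkp : ((k:ℝ)+1) * p < 1) (hk : 1 ≤ k)
    (w : ℕ) (hwi : i ≤ w) (hw : 1 ≤ w) (n : ℕ) :
    μ {ω | ∀ m, 1 ≤ m → m ≤ n → rwalk (i:ℤ) (fun j => X j ω) m ≠ (i:ℤ)}
      ≤ ∑ s ∈ Finset.range (n+1),
          ENNReal.ofReal (1 - (p ^ (k+1)) ^ w) ^ (s/w)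
            * ENNReal.ofReal (Real.exp (lam k p * ((k:ℝ) - 1)) * rho k p ^ (n - (s+1))) := by
  have hp1 := p_lt_one k p hp0 hkp
  set A := {ω | ∀ m, 1 ≤ m → m ≤ n → rwalk (i:ℤ) (fun j => X j ω) m ≠ (i:ℤ)} with hA
  set G := {ω : Ω | ∀ m, -1 ≤ X m ω ∧ X m ω ≤ (k:ℤ)} with hG
  have hGc : μ Gᶜ = 0 := meas_G μ k p hmeas hdist hp0 hp1
  have hincl : A ∩ G ⊆ ⋃ s ∈ Finset.range (n+1), (Bev X i s ∩ Cev k X s n) := by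
    rintro ω ⟨hωA, hωG⟩
    obtain ⟨s, hsn, hBs, hCs⟩ := path_decomp k i n hk (fun j => X j ω) hωG hωA
    exact Set.mem_biUnion (Finset.mem_range.mpr (Nat.lt_succ_of_le hsn)) ⟨hBs, hCs⟩
  calc μ A ≤ μ ((A ∩ G) ∪ Gᶜ) := measure_mono (fun ω hω => by
        by_cases hg : ω ∈ G
        · exact Or.inl ⟨hω, hg⟩
        · exact Or.inr hg)
    _ ≤ μ (A ∩ G) + μ Gᶜ := measure_union_le _ _
    _ = μ (A ∩ G) := by rw [hGc, add_zero]
    _ ≤ μ (⋃ s ∈ Finset.range (n+1), (Bev X i s ∩ Cev k X s n)) := measure_mono hincl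
    _ ≤ ∑ s ∈ Finset.range (n+1), μ (Bev X i s ∩ Cev k X s n) :=
        measure_biUnion_finset_le _ _
    _ ≤ _ := by
        refine Finset.sum_le_sum fun s _ => ?_
        rw [BC_prod μ k X i hindep hmeas s n]
        exact mul_le_mul'
          (Bev_bound μ k p X i hindep hmeas hdist hp0 hk w hwi hw s)
          (Cev_bound μ k p X hindep hmeas hdist hp0 hkp s n)

end events2

/-- per-term real bound -/
lemma term_bound (β ρ : ℝ) (hβ0 : 0 < β) (hβ1 : β < 1) (hρ0 : 0 ≤ ρ) (hρ1 : ρ < 1)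
    (w : ℕ) (hw : 1 ≤ w) (E : ℝ) (hE : 1 ≤ E) (n s : ℕ) (hs : s ≤ n) :
    β ^ (s/w) * (E * ρ ^ (n - (s+1))) ≤ (β⁻¹ * E) * (max (β ^ ((1:ℝ)/w)) ρ) ^ (n-1) := by
  set γ := β ^ ((1:ℝ)/w) with hγ
  set δ := max γ ρ with hδ
  have hw0 : (0:ℝ) < w := by exact_mod_cast hw
  have hγ0 : 0 ≤ γ := Real.rpow_nonneg hβ0.le _
  have hγ1 : γ < 1 := Real.rpow_lt_one hβ0.le hβ1 (by positivity)
  have hδ0 : 0 ≤ δ := le_trans hγ0 (le_max_left _ _)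
  have hδ1 : δ < 1 := max_lt hγ1 hρ1
  -- step 1 : β ^ (s/w) ≤ β⁻¹ * γ ^ s
  have step1 : β ^ (s/w) ≤ β⁻¹ * γ ^ s := by
    have hcast : β ^ (s/w) = β ^ (((s/w : ℕ)):ℝ) := (Real.rpow_natCast β (s/w)).symm
    have hlt : (s:ℝ)/(w:ℝ) - 1 ≤ (((s/w : ℕ)):ℝ) := by
      have h1 : s < s/w * w + w := Nat.lt_div_mul_add (by omega)
      have h2 : (s:ℝ) < ((s/w : ℕ):ℝ) * w + w := by exact_mod_cast h1
      rw [div_sub_one (by positivity), div_le_iff₀ hw0]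
      nlinarith
    have hmono : β ^ (((s/w:ℕ)):ℝ) ≤ β ^ ((s:ℝ)/(w:ℝ) - 1) :=
      Real.rpow_le_rpow_of_exponent_ge hβ0 hβ1.le hlt
    have heq : β ^ ((s:ℝ)/(w:ℝ) - 1) = β⁻¹ * γ ^ s := by
      rw [Real.rpow_sub hβ0, Real.rpow_one]
      rw [hγ, ← Real.rpow_natCast (β ^ ((1:ℝ)/w)) s, ← Real.rpow_mul hβ0.le]
      rw [show (1:ℝ)/w * (s:ℝ) = (s:ℝ)/(w:ℝ) by ring]
      ring
    rw [hcast]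
    exact le_of_le_of_eq hmono heq
  -- step 2 : γ ^ s * ρ ^ (n - (s+1)) ≤ δ ^ (n-1)
  have step2 : γ ^ s * ρ ^ (n - (s+1)) ≤ δ ^ (n-1) := by
    have h1 : γ ^ s ≤ δ ^ s := pow_le_pow_left₀ hγ0 (le_max_left _ _) s
    have h2 : ρ ^ (n - (s+1)) ≤ δ ^ (n - (s+1)) := pow_le_pow_left₀ hρ0 (le_max_right _ _) _
    calc γ ^ s * ρ ^ (n - (s+1)) ≤ δ ^ s * δ ^ (n - (s+1)) :=
          mul_le_mul h1 h2 (pow_nonneg hρ0 _) (pow_nonneg hδ0 _)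
      _ = δ ^ (s + (n - (s+1))) := (pow_add δ s _).symm
      _ ≤ δ ^ (n-1) := pow_le_pow_of_le_one hδ0 hδ1.le (by omega)
  calc β ^ (s/w) * (E * ρ ^ (n - (s+1)))
      ≤ (β⁻¹ * γ ^ s) * (E * ρ ^ (n - (s+1))) := by
        refine mul_le_mul_of_nonneg_right step1 ?_
        exact mul_nonneg (by linarith) (pow_nonneg hρ0 _)
    _ = (β⁻¹ * E) * (γ ^ s * ρ ^ (n - (s+1))) := by ring
    _ ≤ (β⁻¹ * E) * δ ^ (n-1) := by
        refine mul_le_mul_of_nonneg_left step2 ?_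
        exact mul_nonneg (inv_nonneg.mpr hβ0.le) (by linarith)

/-- All states of the Tetrys chain are positive recurrent in the regime `p < 1/(k+1)`:
for every state `i`, the first return time to `i` of the reflected walk started at `i` has
finite expectation. -/
theorem stmt_14 {Ω : Type*} [MeasurableSpace Ω] (μ : Measure Ω) [IsProbabilityMeasure μ]
    (k : ℕ) (hk : 1 ≤ k) (p : ℝ) (hp0 : 0 < p)
    (hpR : p < 1 / (k + 1 : ℝ))
    (X : ℕ → Ω → ℤ)
    (hmeas : ∀ n, Measurable (X n))
    (hindep : iIndepFun X μ)
    (hdist : ∀ n, ∀ u : ℕ, u ≤ k + 1 →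
      μ {ω | X n ω = (u : ℤ) - 1} =
        ENNReal.ofReal (((k + 1).choose u : ℝ) * p ^ u * (1 - p) ^ (k + 1 - u)))
    (Y : ℕ → ℕ → Ω → ℤ)
    (hY0 : ∀ y ω, Y y 0 ω = (y : ℤ))
    (hYs : ∀ y n ω, Y y (n + 1) ω = max (Y y n ω + X n ω) 0)
    (T : ℕ → Ω → ℕ∞)
    (hT : ∀ i ω, T i ω = sInf {n : ℕ∞ | ∃ m : ℕ, 1 ≤ m ∧ n = (m : ℕ∞) ∧ Y i m ω = (i : ℤ)}) :
    ∀ i : ℕ, ∫⁻ ω, (T i ω : ℝ≥0∞) ∂μ < ⊤ := by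
  classical
  intro i
  -- constants
  have hk1 : (0:ℝ) < (k:ℝ) + 1 := by positivity
  have hkp : ((k:ℝ)+1) * p < 1 := by
    rw [lt_div_iff₀ hk1] at hpR; linarith
  have hp1 : p < 1 := p_lt_one k p hp0 hkp
  have hdist' : ∀ n, ∀ u : ℕ, u ≤ k + 1 →
      μ {ω | X n ω = (u : ℤ) - 1} = ENNReal.ofReal (qq k p u) := hdist
  set w := max i 1 with hwdef
  have hwi : i ≤ w := le_max_left _ _
  have hw : 1 ≤ w := le_max_right _ _
  set β : ℝ := 1 - (p ^ (k+1)) ^ w with hβdef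
  set E : ℝ := Real.exp (lam k p * ((k:ℝ) - 1)) with hEdef
  have hπ0 : 0 < (p ^ (k+1)) ^ w := by positivity
  have hπ1 : (p ^ (k+1)) ^ w < 1 :=
    pow_lt_one₀ (by positivity) (pow_lt_one₀ hp0.le hp1 (by omega)) (Nat.one_le_iff_ne_zero.mp hw)
  have hβ0 : 0 < β := by rw [hβdef]; linarith
  have hβ1 : β < 1 := by rw [hβdef]; linarith
  have hρ0 : 0 ≤ rho k p := rho_nonneg k p hp0 hp1
  have hρ1 : rho k p < 1 := rho_lt_one k p hp0 hkp
  have hE1 : 1 ≤ E := by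
    rw [hEdef]
    refine Real.one_le_exp (mul_nonneg (lam_pos k p hkp).le ?_)
    have : (1:ℝ) ≤ (k:ℝ) := by exact_mod_cast hk
    linarith
  set δ : ℝ := max (β ^ ((1:ℝ)/w)) (rho k p) with hδdef
  set C : ℝ := β⁻¹ * E with hCdef
  have hδ0 : 0 ≤ δ := le_trans (Real.rpow_nonneg hβ0.le _) (le_max_left _ _)
  have hδ1 : δ < 1 := max_lt (Real.rpow_lt_one hβ0.le hβ1 (by positivity)) hρ1
  have hC0 : 0 ≤ C := mul_nonneg (inv_nonneg.mpr hβ0.le) (by linarith)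
  -- Y equals the deterministic walk
  have hYr : ∀ m ω, Y i m ω = rwalk (i:ℤ) (fun j => X j ω) m := by
    intro m
    induction m with
    | zero => intro ω; rw [hY0]; rfl
    | succ m ih => intro ω; rw [hYs, ih ω]; rfl
  -- no-return events
  set Aset : ℕ → Set Ω := fun n => {ω | ∀ m, 1 ≤ m → m ≤ n → Y i m ω ≠ (i:ℤ)} with hAdef
  have hYmeas : ∀ m, Measurable (Y i m) := by
    intro m
    induction m with
    | zero =>
        have : Y i 0 = fun _ => (i:ℤ) := funext (hY0 i)
        rw [this]; exact measurable_const
    | succ m ih =>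
        have : Y i (m+1) = fun ω => max (Y i m ω + X m ω) 0 := funext (hYs i m)
        rw [this]
        exact (ih.add (hmeas m)).max measurable_const
  have hAmeas : ∀ n, MeasurableSet (Aset n) := by
    intro n
    have : Aset n = ⋂ m ∈ Finset.Icc 1 n, {ω | Y i m ω ≠ (i:ℤ)} := by
      ext ω
      simp only [hAdef, Set.mem_setOf_eq, Set.mem_iInter, Finset.mem_Icc]
      constructor
      · intro h m hm; exact h m hm.1 hm.2
      · intro h m h1 h2; exact h m ⟨h1, h2⟩
    rw [this]
    exact MeasurableSet.biInter (Finset.Icc 1 n).countable_toSet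
      (fun m _ => ((hYmeas m) (measurableSet_singleton ((i:ℤ)))).compl)
  -- T level sets
  have hTset : ∀ n : ℕ, {ω | (n:ℕ∞) < T i ω} = Aset n := by
    intro n
    ext ω
    simp only [Set.mem_setOf_eq, hAdef]
    constructor
    · intro hlt m h1 h2 hYi
      have hmem : (m:ℕ∞) ∈ {n : ℕ∞ | ∃ m' : ℕ, 1 ≤ m' ∧ n = (m' : ℕ∞) ∧ Y i m' ω = (i:ℤ)} :=
        ⟨m, h1, rfl, hYi⟩
      have : T i ω ≤ (m:ℕ∞) := by rw [hT]; exact sInf_le hmem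
      have hmn : (m:ℕ∞) ≤ (n:ℕ∞) := by exact_mod_cast h2
      exact absurd (lt_of_lt_of_le hlt (le_trans this hmn)) (lt_irrefl _)
    · intro h
      rw [hT]
      have hle : ((n+1:ℕ):ℕ∞) ≤ sInf {n : ℕ∞ | ∃ m : ℕ, 1 ≤ m ∧ n = (m:ℕ∞) ∧ Y i m ω = (i:ℤ)} := by
        refine le_sInf ?_
        rintro b ⟨m, hm1, rfl, hYi⟩
        have : n + 1 ≤ m := by
          by_contra hcon
          exact h m hm1 (by omega) hYi
        exact_mod_cast this
      refine lt_of_lt_of_le ?_ hle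
      exact_mod_cast Nat.lt_succ_self n
  -- pointwise representation of T
  have hTrep : ∀ ω, ((T i ω : ℕ∞) : ℝ≥0∞)
      = ∑' n : ℕ, Set.indicator {ω' | (n:ℕ∞) < T i ω'} (fun _ => (1:ℝ≥0∞)) ω := by
    intro ω
    have hind : ∀ n : ℕ, Set.indicator {ω' | (n:ℕ∞) < T i ω'} (fun _ => (1:ℝ≥0∞)) ω
        = if (n:ℕ∞) < T i ω then 1 else 0 := by
      intro n
      simp [Set.indicator_apply, Set.mem_setOf_eq]
    rw [tsum_congr hind]
    cases hτ : T i ω using ENat.recTopCoe with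
    | top =>
        have : ∀ n : ℕ, (if ((n:ℕ∞) < (⊤:ℕ∞)) then (1:ℝ≥0∞) else 0) = 1 := by
          intro n; rw [if_pos (by exact_mod_cast lt_top_iff_ne_top.mpr (by simp))]
        rw [tsum_congr this]
        rw [ENNReal.tsum_const_eq_top_of_ne_zero one_ne_zero]
        simp
    | coe m =>
        have hcalc : ∀ n : ℕ, (if ((n:ℕ∞) < (m:ℕ∞)) then (1:ℝ≥0∞) else 0)
            = if n < m then 1 else 0 := by
          intro n
          by_cases hc : n < m
          · rw [if_pos (by exact_mod_cast hc), if_pos hc]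
          · rw [if_neg (by exact_mod_cast hc), if_neg hc]
        rw [tsum_congr hcalc]
        rw [tsum_eq_sum (s := Finset.range m) (fun n hn => by
          rw [if_neg (fun hc => hn (Finset.mem_range.mpr hc))])]
        rw [Finset.sum_congr rfl (fun n hn => if_pos (Finset.mem_range.mp hn))]
        rw [Finset.sum_const, Finset.card_range, nsmul_eq_mul, mul_one]
        simp
  -- integral = sum of tail probabilities
  have hint : ∫⁻ ω, ((T i ω : ℕ∞) : ℝ≥0∞) ∂μ = ∑' n : ℕ, μ (Aset n) := by
    calc ∫⁻ ω, ((T i ω : ℕ∞) : ℝ≥0∞) ∂μ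
        = ∫⁻ ω, ∑' n : ℕ, Set.indicator {ω' | (n:ℕ∞) < T i ω'} (fun _ => (1:ℝ≥0∞)) ω ∂μ := by
          exact lintegral_congr hTrep
      _ = ∑' n : ℕ, ∫⁻ ω, Set.indicator {ω' | (n:ℕ∞) < T i ω'} (fun _ => (1:ℝ≥0∞)) ω ∂μ := by
          refine lintegral_tsum (fun n => ?_)
          refine (Measurable.indicator measurable_const ?_).aemeasurable
          rw [hTset n]; exact hAmeas n
      _ = ∑' n : ℕ, μ {ω' | (n:ℕ∞) < T i ω'} := by
          refine tsum_congr fun n => ?_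
          have := lintegral_indicator_one (μ := μ) (s := {ω' | (n:ℕ∞) < T i ω'})
            (by rw [hTset n]; exact hAmeas n)
          exact this
      _ = ∑' n : ℕ, μ (Aset n) := tsum_congr fun n => by rw [hTset n]
  rw [hint]
  -- bound each term
  have hpern : ∀ n : ℕ, μ (Aset n)
      ≤ ENNReal.ofReal (((n+1:ℕ):ℝ) * (C * δ ^ (n-1))) := by
    intro n
    have hAeq : Aset n = {ω | ∀ m, 1 ≤ m → m ≤ n → rwalk (i:ℤ) (fun j => X j ω) m ≠ (i:ℤ)} := by
      ext ω
      simp only [hAdef, Set.mem_setOf_eq]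
      constructor
      · intro h m h1 h2; rw [← hYr m ω]; exact h m h1 h2
      · intro h m h1 h2; rw [hYr m ω]; exact h m h1 h2
    rw [hAeq]
    refine le_trans (master_bound μ k p X i hindep hmeas hdist' hp0 hkp hk w hwi hw n) ?_
    have hterm : ∀ s, s ∈ Finset.range (n+1) →
        ENNReal.ofReal β ^ (s/w) * ENNReal.ofReal (E * rho k p ^ (n - (s+1)))
          ≤ ENNReal.ofReal (C * δ ^ (n-1)) := by
      intro s hs
      have hsn : s ≤ n := by simpa [Nat.lt_succ_iff] using hs
      rw [← ENNReal.ofReal_pow hβ0.le, ← ENNReal.ofReal_mul (by positivity)]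
      refine ENNReal.ofReal_le_ofReal ?_
      exact term_bound β (rho k p) hβ0 hβ1 hρ0 hρ1 w hw E hE1 n s hsn
    calc ∑ s ∈ Finset.range (n+1), ENNReal.ofReal β ^ (s/w)
            * ENNReal.ofReal (E * rho k p ^ (n - (s+1)))
        ≤ ∑ s ∈ Finset.range (n+1), ENNReal.ofReal (C * δ ^ (n-1)) :=
          Finset.sum_le_sum hterm
      _ = ((n+1:ℕ)) • ENNReal.ofReal (C * δ ^ (n-1)) := by
          rw [Finset.sum_const, Finset.card_range]
      _ = ENNReal.ofReal (((n+1:ℕ):ℝ) * (C * δ ^ (n-1))) := by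
          rw [nsmul_eq_mul, ← ENNReal.ofReal_natCast (n+1),
            ← ENNReal.ofReal_mul (Nat.cast_nonneg _)]
  -- summability of the bound
  set f : ℕ → ℝ := fun n => ((n+1:ℕ):ℝ) * (C * δ ^ (n-1)) with hfdef
  have hfnonneg : ∀ n, 0 ≤ f n := by
    intro n
    exact mul_nonneg (Nat.cast_nonneg _) (mul_nonneg hC0 (pow_nonneg hδ0 _))
  have hfsummable : Summable f := by
    rw [← summable_nat_add_iff 1]
    have h1 : Summable (fun n : ℕ => (n:ℝ)^1 * δ^n) :=
      summable_pow_mul_geometric_of_norm_lt_one 1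
        (by rw [Real.norm_eq_abs, abs_of_nonneg hδ0]; exact hδ1)
    have h2 : Summable (fun n : ℕ => δ^n) := summable_geometric_of_lt_one hδ0 hδ1
    have := (h1.mul_left C).add (h2.mul_left (2*C))
    refine this.congr fun n => ?_
    simp only [hfdef, Nat.add_sub_cancel]
    push_cast
    ring
  calc ∑' n : ℕ, μ (Aset n) ≤ ∑' n : ℕ, ENNReal.ofReal (f n) := ENNReal.tsum_le_tsum hpern
    _ = ENNReal.ofReal (∑' n, f n) := (ENNReal.ofReal_tsum_of_nonneg hfnonneg hfsummable).symm
    _ < ⊤ := ENNReal.ofReal_lt_top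
end
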